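/- arXiv:2004.13092 — 6 statements merged into one kernel-verified Lean document; each statement's English description precedes it below -/
import Mathlib

section
/- Let A be a unital C*-algebra, let D ∈ A be self-adjoint, let a ∈ A be invertible, set g := ‖a⁻¹‖⁻¹, and let κ > 0. Let L_κ be the self-adjoint element of the C*-algebra M₂(A) of 2×2 matrices over A given by L_κ = [[κD, a], [a*, −κD]]. Then L_κ² ≥ (g² − κ‖Da − aD‖)·1 in M₂(A). In particular, if κ‖Da − aD‖ < g², then L_κ is invertible. -/
open Matrix

/-- The odd spectral localizer `L_κ = [[κD, a], [a*, −κD]]` as a 2×2 matrix over a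
unital C*-algebra. -/
noncomputable def oddLocalizer {A : Type*} [CStarAlgebra A] (κ : ℝ) (D a : A) :
    Matrix (Fin 2) (Fin 2) A :=
  !![κ • D, a; star a, -(κ • D)]

section Aux

variable {A : Type*} [CStarAlgebra A]

private lemma aux_smul_le [PartialOrder A] [StarOrderedRing A] {r : ℝ} (hr : 0 ≤ r) {x y : A}
    (h : x ≤ y) : r • x ≤ r • y := by
  rw [← sub_nonneg, ← smul_sub]
  exact smul_nonneg hr (sub_nonneg.2 h)

private lemma aux_star_mul_self_le [PartialOrder A] [StarOrderedRing A] (x : A) :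
    star x * x ≤ (‖x‖ ^ 2) • (1 : A) := by
  simpa [Algebra.algebraMap_eq_smul_one] using
    CStarAlgebra.star_mul_le_algebraMap_norm_sq (a := x)

private lemma aux_inv_sa [PartialOrder A] [StarOrderedRing A] (P : Aˣ)
    (h : IsSelfAdjoint (P : A)) : star ((P⁻¹ : Aˣ) : A) = ((P⁻¹ : Aˣ) : A) := by
  have h1 : star ((P⁻¹ : Aˣ) : A) * (P : A) = 1 := by
    rw [← h.star_eq, ← StarMul.star_mul, Units.mul_inv, star_one]
  calc star ((P⁻¹ : Aˣ) : A) = star ((P⁻¹ : Aˣ) : A) * ((P : A) * ((P⁻¹ : Aˣ) : A)) := by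
        rw [Units.mul_inv, mul_one]
    _ = ((P⁻¹ : Aˣ) : A) := by rw [← mul_assoc, h1, one_mul]

/-- If `t•1 ≤ p` with `t > 0`, then `p` is a unit and `p⁻¹ ≤ t⁻¹ • 1`. -/
private lemma aux_inv_le [PartialOrder A] [StarOrderedRing A] {t : ℝ} (ht : 0 < t) {p : A}
    (hp : t • (1 : A) ≤ p) (P : Aˣ) (hP : (P : A) = p) : ((P⁻¹ : Aˣ) : A) ≤ t⁻¹ • 1 := by
  have hT : IsUnit (t • (1 : A)) := by
    refine ⟨⟨t • 1, t⁻¹ • 1, ?_, ?_⟩, rfl⟩ <;>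
      simp [smul_smul, mul_inv_cancel₀ ht.ne', inv_mul_cancel₀ ht.ne']
  obtain ⟨T, hTe⟩ := hT
  have hTinv : ((T⁻¹ : Aˣ) : A) = t⁻¹ • 1 := by
    apply Units.inv_eq_of_mul_eq_one_right
    rw [hTe]; simp [smul_smul, mul_inv_cancel₀ ht.ne', inv_mul_cancel₀ ht.ne']
  have := CStarAlgebra.inv_le_inv (a := T) (b := P)
    (by rw [hTe]; exact smul_nonneg ht.le zero_le_one) (by rw [hTe, hP]; exact hp)
  rwa [hTinv] at this

private lemma aux_isUnit_smul_one {t : ℝ} (ht : t ≠ 0) : IsUnit (t • (1 : A)) := by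
  refine ⟨⟨t • 1, t⁻¹ • 1, ?_, ?_⟩, rfl⟩ <;>
    simp [smul_smul, mul_inv_cancel₀ ht, inv_mul_cancel₀ ht]

/-- The spectral gap bounds: `g² • 1 ≤ a* a` and `g² • 1 ≤ a a*` for `g = ‖a⁻¹‖⁻¹`. -/
private lemma aux_gap [PartialOrder A] [StarOrderedRing A] [Nontrivial A] {a : A}
    (ha : IsUnit a) :
    ((‖Ring.inverse a‖⁻¹ ^ 2) • (1 : A) ≤ star a * a) ∧
      ((‖Ring.inverse a‖⁻¹ ^ 2) • (1 : A) ≤ a * star a) := by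
  set b := Ring.inverse a with hb
  have hba : b * a = 1 := Ring.inverse_mul_cancel a ha
  have hab : a * b = 1 := Ring.mul_inverse_cancel a ha
  have hbne : b ≠ 0 := by
    intro h
    exact one_ne_zero (α := A) (by rw [← hba, h, zero_mul])
  have hbn : (0 : ℝ) < ‖b‖ := norm_pos_iff.2 hbne
  have hgb : ‖b‖⁻¹ ^ 2 * ‖b‖ ^ 2 = 1 := by field_simp
  constructor
  · have h2 : star a * (star b * b) * a = 1 := by
      calc star a * (star b * b) * a = star a * star b * (b * a) := by
            simp only [mul_assoc]
        _ = star (b * a) * (b * a) := by rw [StarMul.star_mul b a]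
        _ = 1 := by rw [hba, star_one, one_mul]
    have key : (‖b‖⁻¹ ^ 2) • (star a * ((‖b‖ ^ 2) • (1 : A) - star b * b) * a) =
        star a * a - (‖b‖⁻¹ ^ 2) • (1 : A) := by
      rw [mul_sub, sub_mul, h2, smul_sub]
      have : star a * (‖b‖ ^ 2) • (1 : A) * a = (‖b‖ ^ 2) • (star a * a) := by
        simp [mul_smul_comm, smul_mul_assoc]
      rw [this, smul_smul, hgb, one_smul]
    rw [← sub_nonneg, ← key]
    exact smul_nonneg (by positivity)
      (star_left_conjugate_nonneg (sub_nonneg.2 (aux_star_mul_self_le b)) a)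
  · have h2 : a * (b * star b) * star a = 1 := by
      calc a * (b * star b) * star a = a * b * (star b * star a) := by
            simp only [mul_assoc]
        _ = (a * b) * star (a * b) := by rw [StarMul.star_mul a b]
        _ = 1 := by rw [hab, star_one, one_mul]
    have hbb : b * star b ≤ (‖b‖ ^ 2) • (1 : A) := by
      simpa [norm_star] using aux_star_mul_self_le (star b)
    have key : (‖b‖⁻¹ ^ 2) • (a * ((‖b‖ ^ 2) • (1 : A) - b * star b) * star a) =
        a * star a - (‖b‖⁻¹ ^ 2) • (1 : A) := by
      rw [mul_sub, sub_mul, h2, smul_sub]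
      have : a * (‖b‖ ^ 2) • (1 : A) * star a = (‖b‖ ^ 2) • (a * star a) := by
        simp [mul_smul_comm, smul_mul_assoc]
      rw [this, smul_smul, hgb, one_smul]
    rw [← sub_nonneg, ← key]
    exact smul_nonneg (by positivity) (star_right_conjugate_nonneg (sub_nonneg.2 hbb) a)

/-- The square of the odd localizer, computed entrywise. -/
private lemma aux_sq (κ : ℝ) (D a : A) (hD : IsSelfAdjoint D) :
    oddLocalizer κ D a * oddLocalizer κ D a =
      !![(κ * κ) • (D * D) + a * star a, κ • (D * a - a * D);
         star (κ • (D * a - a * D)), (κ * κ) • (D * D) + star a * a] := by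
  ext i j
  fin_cases i <;> fin_cases j <;>
    simp [oddLocalizer, Matrix.mul_apply, Fin.sum_univ_two, smul_smul, smul_sub,
      mul_smul_comm, smul_mul_assoc, star_smul, hD.star_eq, mul_comm] <;>
    abel

private lemma aux_sub_smul (M : Matrix (Fin 2) (Fin 2) A) (s : ℝ) (p c q : A)
    (h : M = !![p, c; star c, q]) :
    M - s • (1 : Matrix (Fin 2) (Fin 2) A) = !![p - s • 1, c; star c, q - s • 1] := by
  subst h; ext i j; fin_cases i <;> fin_cases j <;> simp [Matrix.one_apply]

private lemma aux_cholesky (f w r : A) (hf : star f = f) (hr : star r = r) :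
    star !![f, w; 0, r] * !![f, w; 0, r] =
      !![f * f, f * w; star w * f, star w * w + r * r] := by
  ext i j
  fin_cases i <;> fin_cases j <;>
    simp [Matrix.mul_apply, Matrix.star_apply, Fin.sum_univ_two, hf, hr]

private lemma aux_triple (p x y R : A) :
    !![1, 0; x, 1] * !![p, 0; 0, R] * !![1, y; 0, 1] =
      !![p, p * y; x * p, x * p * y + R] := by
  ext i j
  fin_cases i <;> fin_cases j <;>
    simp [Matrix.mul_apply, Fin.sum_univ_two, mul_assoc]

private lemma aux_unit_upper (x : A) : IsUnit !![(1 : A), x; 0, 1] := by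
  refine ⟨⟨_, !![(1 : A), -x; 0, 1], ?_, ?_⟩, rfl⟩ <;>
    (ext i j; fin_cases i <;> fin_cases j <;>
      simp [Matrix.mul_apply, Fin.sum_univ_two, Matrix.one_apply])

private lemma aux_unit_lower (x : A) : IsUnit !![(1 : A), 0; x, 1] := by
  refine ⟨⟨_, !![(1 : A), 0; -x, 1], ?_, ?_⟩, rfl⟩ <;>
    (ext i j; fin_cases i <;> fin_cases j <;>
      simp [Matrix.mul_apply, Fin.sum_univ_two, Matrix.one_apply])

private lemma aux_unit_diag {p R : A} (hp : IsUnit p) (hR : IsUnit R) :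
    IsUnit !![p, 0; 0, R] := by
  obtain ⟨P, rfl⟩ := hp; obtain ⟨Ru, rfl⟩ := hR
  refine ⟨⟨_, !![((P⁻¹ : Aˣ) : A), 0; 0, ((Ru⁻¹ : Aˣ) : A)], ?_, ?_⟩, rfl⟩ <;>
    (ext i j; fin_cases i <;> fin_cases j <;>
      simp [Matrix.mul_apply, Fin.sum_univ_two, Matrix.one_apply])

/-- If `x * x` is a unit, so is `x`. -/
private lemma aux_unit_of_sq {R : Type*} [Ring R] {x : R} (h : IsUnit (x * x)) : IsUnit x := by
  obtain ⟨K, hK⟩ := h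
  set V := ((K⁻¹ : Rˣ) : R) with hV
  have h1 : x * (x * V) = 1 := by rw [← mul_assoc, ← hK, Units.mul_inv]
  have h2 : (V * x) * x = 1 := by rw [mul_assoc, ← hK, Units.inv_mul]
  have hc : x * V = V * x := by
    calc x * V = 1 * (x * V) := (one_mul _).symm
      _ = ((V * x) * x) * (x * V) := by rw [h2]
      _ = (V * x) * (x * (x * V)) := by simp only [mul_assoc]
      _ = V * x := by rw [h1, mul_one]
  exact ⟨⟨x, x * V, h1, by rw [hc]; exact h2⟩, rfl⟩

end Aux

/-- Quadratic lower bound for the odd spectral localizer: for `D` self-adjoint, `a`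
invertible with spectral gap `g = ‖a⁻¹‖⁻¹`, and `κ > 0`, one has
`L_κ² ≥ (g² − κ‖[D,a]‖)·1` in `M₂(A)` (positivity being expressed as being of the
form `star y * y`); in particular, if `κ‖[D,a]‖ < g²`, then `L_κ` is invertible. -/
theorem oddLocalizer_sq_ge (A : Type*) [CStarAlgebra A] (D a : A)
    (hD : IsSelfAdjoint D) (ha : IsUnit a) (κ : ℝ) (hκ : 0 < κ) :
    (∃ y : Matrix (Fin 2) (Fin 2) A,
      oddLocalizer κ D a * oddLocalizer κ D a -
          ((‖Ring.inverse a‖⁻¹ ^ 2 - κ * ‖D * a - a * D‖) • (1 : Matrix (Fin 2) (Fin 2) A)) =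
        star y * y) ∧
    (κ * ‖D * a - a * D‖ < ‖Ring.inverse a‖⁻¹ ^ 2 → IsUnit (oddLocalizer κ D a)) := by
  rcases subsingleton_or_nontrivial A with hsub | hnt
  · haveI : Subsingleton (Matrix (Fin 2) (Fin 2) A) :=
      ⟨fun M N => by ext i j; exact Subsingleton.elim _ _⟩
    exact ⟨⟨0, Subsingleton.elim _ _⟩, fun _ =>
      ⟨⟨_, 1, Subsingleton.elim _ _, Subsingleton.elim _ _⟩, rfl⟩⟩
  letI : PartialOrder A := CStarAlgebra.spectralOrder A
  haveI : StarOrderedRing A := CStarAlgebra.spectralOrderedRing A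
  set g : ℝ := ‖Ring.inverse a‖⁻¹ with hgdef
  set t : ℝ := κ * ‖D * a - a * D‖ with htdef
  set c : A := κ • (D * a - a * D) with hcdef
  set L : Matrix (Fin 2) (Fin 2) A := oddLocalizer κ D a with hLdef
  set p₀ : A := (κ * κ) • (D * D) + a * star a with hp₀def
  set q₀ : A := (κ * κ) • (D * D) + star a * a with hq₀def
  have hsq : L * L = !![p₀, c; star c, q₀] := aux_sq κ D a hD
  have hgap := aux_gap (A := A) ha
  have hD2 : (0 : A) ≤ (κ * κ) • (D * D) := by
    have : (κ * κ) • (D * D) = star (κ • D) * (κ • D) := by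
      simp [star_smul, hD.star_eq, smul_smul, mul_smul_comm, smul_mul_assoc]
    rw [this]
    exact star_mul_self_nonneg _
  have ht0 : 0 ≤ t := mul_nonneg hκ.le (norm_nonneg _)
  have hcn : ‖c‖ = t := by
    rw [hcdef, norm_smul, Real.norm_eq_abs, abs_of_pos hκ, htdef]
  have hcc : star c * c ≤ (t * t) • (1 : A) := by
    have := aux_star_mul_self_le c
    rwa [hcn, pow_two] at this
  have hp₀g : (g ^ 2) • (1 : A) ≤ p₀ := by
    rw [← sub_nonneg]
    have : p₀ - (g ^ 2) • (1 : A) = (κ * κ) • (D * D) + (a * star a - (g ^ 2) • 1) := by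
      rw [hp₀def]; abel
    rw [this]
    exact add_nonneg hD2 (sub_nonneg.2 hgap.2)
  have hq₀g : (g ^ 2) • (1 : A) ≤ q₀ := by
    rw [← sub_nonneg]
    have : q₀ - (g ^ 2) • (1 : A) = (κ * κ) • (D * D) + (star a * a - (g ^ 2) • 1) := by
      rw [hq₀def]; abel
    rw [this]
    exact add_nonneg hD2 (sub_nonneg.2 hgap.1)
  set s : ℝ := g ^ 2 - t with hsdef
  set p : A := p₀ - s • 1 with hpdef
  set q : A := q₀ - s • 1 with hqdef
  have hsub : L * L - s • (1 : Matrix (Fin 2) (Fin 2) A) = !![p, c; star c, q] :=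
    aux_sub_smul _ s p₀ c q₀ hsq
  have hpt : t • (1 : A) ≤ p := by
    rw [← sub_nonneg]
    have : p - t • (1 : A) = (p₀ - (g ^ 2) • 1) + ((g ^ 2) • (1 : A) - s • 1 - t • 1) := by
      rw [hpdef]; abel
    rw [this]
    have h0 : (g ^ 2) • (1 : A) - s • 1 - t • 1 = 0 := by
      rw [hsdef, sub_smul]; abel
    rw [h0, add_zero]
    exact sub_nonneg.2 hp₀g
  have hqt : t • (1 : A) ≤ q := by
    rw [← sub_nonneg]
    have : q - t • (1 : A) = (q₀ - (g ^ 2) • 1) + ((g ^ 2) • (1 : A) - s • 1 - t • 1) := by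
      rw [hqdef]; abel
    rw [this]
    have h0 : (g ^ 2) • (1 : A) - s • 1 - t • 1 = 0 := by
      rw [hsdef, sub_smul]; abel
    rw [h0, add_zero]
    exact sub_nonneg.2 hq₀g
  have hp0 : (0 : A) ≤ p := le_trans (by simpa using smul_nonneg ht0 (zero_le_one (α := A))) hpt
  have hq0 : (0 : A) ≤ q := le_trans (by simpa using smul_nonneg ht0 (zero_le_one (α := A))) hqt
  constructor
  · -- positivity part
    by_cases hcomm : D * a - a * D = 0
    · have htz : t = 0 := by rw [htdef, hcomm, norm_zero, mul_zero]
      have hcz : c = 0 := by rw [hcdef, hcomm, smul_zero]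
      refine ⟨!![CFC.sqrt p, 0; 0, CFC.sqrt q], ?_⟩
      rw [hsub, hcz]
      have hsp : star (CFC.sqrt p) = CFC.sqrt p :=
        (IsSelfAdjoint.of_nonneg (CFC.sqrt_nonneg (a := p))).star_eq
      have hsq' : star (CFC.sqrt q) = CFC.sqrt q :=
        (IsSelfAdjoint.of_nonneg (CFC.sqrt_nonneg (a := q))).star_eq
      ext i j
      fin_cases i <;> fin_cases j <;>
        simp [Matrix.mul_apply, Matrix.star_apply, Fin.sum_univ_two, hsp, hsq',
          CFC.sqrt_mul_sqrt_self p hp0, CFC.sqrt_mul_sqrt_self q hq0]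
    · have ht : 0 < t := mul_pos hκ (norm_pos_iff.2 hcomm)
      obtain ⟨P, hP⟩ : IsUnit p :=
        CStarAlgebra.isUnit_of_le _ hpt ((aux_isUnit_smul_one ht.ne').isStrictlyPositive
          (smul_nonneg ht.le zero_le_one))
      have hPinv_le : ((P⁻¹ : Aˣ) : A) ≤ t⁻¹ • 1 := aux_inv_le ht hpt P hP
      have hpsa : IsSelfAdjoint p := IsSelfAdjoint.of_nonneg hp0
      have hPsa : star ((P⁻¹ : Aˣ) : A) = ((P⁻¹ : Aˣ) : A) :=
        aux_inv_sa P (by rw [hP]; exact hpsa)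
      -- Schur complement bound
      have hconj : star c * ((P⁻¹ : Aˣ) : A) * c ≤ t • (1 : A) := by
        calc star c * ((P⁻¹ : Aˣ) : A) * c ≤ star c * (t⁻¹ • (1 : A)) * c :=
              star_left_conjugate_le_conjugate hPinv_le c
          _ = t⁻¹ • (star c * c) := by simp [mul_smul_comm, smul_mul_assoc]
          _ ≤ t⁻¹ • ((t * t) • (1 : A)) := aux_smul_le (by positivity) hcc
          _ = t • (1 : A) := by rw [smul_smul]; congr 1; field_simp
      set R : A := q - star c * ((P⁻¹ : Aˣ) : A) * c with hRdef
      have hR0 : (0 : A) ≤ R := sub_nonneg.2 (hconj.trans hqt)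
      set f : A := CFC.sqrt p with hfdef
      have hff : f * f = p := CFC.sqrt_mul_sqrt_self p hp0
      have hfsa : star f = f := (IsSelfAdjoint.of_nonneg (CFC.sqrt_nonneg (a := p))).star_eq
      set r : A := CFC.sqrt R with hrdef
      have hrr : r * r = R := CFC.sqrt_mul_sqrt_self R hR0
      have hrsa : star r = r := (IsSelfAdjoint.of_nonneg (CFC.sqrt_nonneg (a := R))).star_eq
      have hPp : ((P⁻¹ : Aˣ) : A) * p = 1 := by rw [← hP, Units.inv_mul]
      have hpP : p * ((P⁻¹ : Aˣ) : A) = 1 := by rw [← hP, Units.mul_inv]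
      have hpf : p * f = f * p := by
        rw [← hff]; simp only [mul_assoc]
      have hfP : f * ((P⁻¹ : Aˣ) : A) = ((P⁻¹ : Aˣ) : A) * f := by
        calc f * ((P⁻¹ : Aˣ) : A)
            = (((P⁻¹ : Aˣ) : A) * p) * (f * ((P⁻¹ : Aˣ) : A)) := by rw [hPp, one_mul]
          _ = ((P⁻¹ : Aˣ) : A) * (p * f) * ((P⁻¹ : Aˣ) : A) := by simp only [mul_assoc]
          _ = ((P⁻¹ : Aˣ) : A) * (f * p) * ((P⁻¹ : Aˣ) : A) := by rw [hpf]
          _ = ((P⁻¹ : Aˣ) : A) * f * (p * ((P⁻¹ : Aˣ) : A)) := by simp only [mul_assoc]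
          _ = ((P⁻¹ : Aˣ) : A) * f := by rw [hpP, mul_one]
      set w : A := ((P⁻¹ : Aˣ) : A) * f * c with hwdef
      have hfw : f * w = c := by
        calc f * w = (f * ((P⁻¹ : Aˣ) : A)) * f * c := by rw [hwdef]; simp only [mul_assoc]
          _ = ((P⁻¹ : Aˣ) : A) * (f * f) * c := by rw [hfP]; simp only [mul_assoc]
          _ = c := by rw [hff, hPp, one_mul]
      have hww : star w * w = star c * ((P⁻¹ : Aˣ) : A) * c := by
        have hsw : star w = star c * (f * ((P⁻¹ : Aˣ) : A)) := by
          rw [hwdef, StarMul.star_mul, StarMul.star_mul, hfsa, hPsa]; try rw [mul_assoc]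
        rw [hsw, hwdef]
        have hmid : f * ((P⁻¹ : Aˣ) : A) * (((P⁻¹ : Aˣ) : A) * f) = ((P⁻¹ : Aˣ) : A) := by
          calc f * ((P⁻¹ : Aˣ) : A) * (((P⁻¹ : Aˣ) : A) * f)
              = ((P⁻¹ : Aˣ) : A) * f * (((P⁻¹ : Aˣ) : A) * f) := by rw [hfP]
            _ = ((P⁻¹ : Aˣ) : A) * ((f * ((P⁻¹ : Aˣ) : A)) * f) := by simp only [mul_assoc]
            _ = ((P⁻¹ : Aˣ) : A) * (((P⁻¹ : Aˣ) : A) * (f * f)) := by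
                rw [hfP]; try simp only [mul_assoc]
            _ = ((P⁻¹ : Aˣ) : A) * (((P⁻¹ : Aˣ) : A) * p) := by rw [hff]
            _ = ((P⁻¹ : Aˣ) : A) := by rw [hPp, mul_one]
        calc star c * (f * ((P⁻¹ : Aˣ) : A)) * (((P⁻¹ : Aˣ) : A) * f * c)
            = star c * (f * ((P⁻¹ : Aˣ) : A) * (((P⁻¹ : Aˣ) : A) * f)) * c := by
              simp only [mul_assoc]
          _ = star c * ((P⁻¹ : Aˣ) : A) * c := by rw [hmid]; try simp only [mul_assoc]
      refine ⟨!![f, w; 0, r], ?_⟩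
      rw [hsub, aux_cholesky f w r hfsa hrsa, hff, hfw]
      have hswf : star w * f = star c := by
        rw [← hfsa, ← StarMul.star_mul, hfw]
      have hq' : star c * ((P⁻¹ : Aˣ) : A) * c + R = q := by rw [hRdef]; abel
      rw [hswf, hww, hrr, hq']
  · -- invertibility part
    intro hlt
    have hg0 : 0 ≤ g := by rw [hgdef]; positivity
    have hg : 0 < g := by
      rcases hg0.lt_or_eq with h | h
      · exact h
      · exfalso
        rw [← h] at hlt
        norm_num at hlt
        linarith
    have hg2 : (0 : ℝ) < g ^ 2 := by positivity
    obtain ⟨P, hP⟩ : IsUnit p₀ :=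
      CStarAlgebra.isUnit_of_le _ hp₀g ((aux_isUnit_smul_one hg2.ne').isStrictlyPositive
        (smul_nonneg hg2.le zero_le_one))
    have hPinv_le : ((P⁻¹ : Aˣ) : A) ≤ (g ^ 2)⁻¹ • 1 := aux_inv_le hg2 hp₀g P hP
    have hconj : star c * ((P⁻¹ : Aˣ) : A) * c ≤ ((g ^ 2)⁻¹ * (t * t)) • (1 : A) := by
      calc star c * ((P⁻¹ : Aˣ) : A) * c ≤ star c * ((g ^ 2)⁻¹ • (1 : A)) * c :=
            star_left_conjugate_le_conjugate hPinv_le c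
        _ = (g ^ 2)⁻¹ • (star c * c) := by simp [mul_smul_comm, smul_mul_assoc]
        _ ≤ (g ^ 2)⁻¹ • ((t * t) • (1 : A)) := aux_smul_le (by positivity) hcc
        _ = ((g ^ 2)⁻¹ * (t * t)) • (1 : A) := by rw [smul_smul]
    set R₀ : A := q₀ - star c * ((P⁻¹ : Aˣ) : A) * c with hR₀def
    have hε : 0 < g ^ 2 - (g ^ 2)⁻¹ * (t * t) := by
      have h1 : t * t < g ^ 2 * g ^ 2 := by nlinarith
      have h2 : (g ^ 2)⁻¹ * (t * t) < (g ^ 2)⁻¹ * (g ^ 2 * g ^ 2) :=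
        mul_lt_mul_of_pos_left h1 (by positivity)
      have h3 : (g ^ 2)⁻¹ * (g ^ 2 * g ^ 2) = g ^ 2 := by field_simp
      linarith
    have hR₀ge : (g ^ 2 - (g ^ 2)⁻¹ * (t * t)) • (1 : A) ≤ R₀ := by
      rw [← sub_nonneg]
      have : R₀ - (g ^ 2 - (g ^ 2)⁻¹ * (t * t)) • (1 : A) =
          (q₀ - (g ^ 2) • 1) + (((g ^ 2)⁻¹ * (t * t)) • (1 : A) -
            star c * ((P⁻¹ : Aˣ) : A) * c) := by
        rw [hR₀def, sub_smul]; abel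
      rw [this]
      exact add_nonneg (sub_nonneg.2 hq₀g) (sub_nonneg.2 hconj)
    have hR₀u : IsUnit R₀ :=
      CStarAlgebra.isUnit_of_le _ hR₀ge ((aux_isUnit_smul_one hε.ne').isStrictlyPositive
        (smul_nonneg hε.le zero_le_one))
    have hPp : ((P⁻¹ : Aˣ) : A) * p₀ = 1 := by rw [← hP, Units.inv_mul]
    have hpP : p₀ * ((P⁻¹ : Aˣ) : A) = 1 := by rw [← hP, Units.mul_inv]
    have hfact : L * L = !![(1 : A), 0; star c * ((P⁻¹ : Aˣ) : A), 1] * !![p₀, 0; 0, R₀] *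
        !![(1 : A), ((P⁻¹ : Aˣ) : A) * c; 0, 1] := by
      rw [aux_triple, hsq]
      have e1 : p₀ * (((P⁻¹ : Aˣ) : A) * c) = c := by
        rw [← mul_assoc, hpP, one_mul]
      have e2 : star c * ((P⁻¹ : Aˣ) : A) * p₀ = star c := by
        rw [mul_assoc, hPp, mul_one]
      have e3 : star c * (((P⁻¹ : Aˣ) : A) * c) + R₀ = q₀ := by
        rw [hR₀def, ← mul_assoc]
        abel
      rw [e1, e2, e3]
    have hLL : IsUnit (L * L) := by
      rw [hfact]
      exact ((aux_unit_lower _).mul (aux_unit_diag (⟨P, hP⟩ : IsUnit p₀) hR₀u)).mul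
        (aux_unit_upper _)
    exact aux_unit_of_sq hLL
end

section
/- Let A be a unital C*-algebra, let D ∈ A be self-adjoint with D² ≥ ρ²·1 for some ρ > 0, let a ∈ A be arbitrary, and let κ > 0. Let L_κ = [[κD, a], [a*, −κD]] ∈ M₂(A). Then L_κ² ≥ (κ²ρ² − κ‖Da − aD‖)·1 in M₂(A). In particular, if κρ² ≥ 2‖Da − aD‖, then L_κ² ≥ (κ²ρ²/2)·1 and L_κ is invertible. -/
open Matrix

section Helpers

private lemma isUnit_of_mul_self' {M : Type*} [Monoid M] {u : M} (h : IsUnit (u * u)) :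
    IsUnit u := by
  obtain ⟨w, hw⟩ := h
  have hcom : u * (w : M) = (w : M) * u := by rw [hw, ← mul_assoc, mul_assoc]
  have hswap : u * (↑w⁻¹ : M) = (↑w⁻¹ : M) * u := by
    calc u * ↑w⁻¹ = ↑w⁻¹ * ↑w * (u * ↑w⁻¹) := by rw [w.inv_mul, one_mul]
      _ = ↑w⁻¹ * (↑w * u) * ↑w⁻¹ := by simp only [mul_assoc]
      _ = ↑w⁻¹ * (u * ↑w) * ↑w⁻¹ := by rw [hcom]
      _ = ↑w⁻¹ * u * (↑w * ↑w⁻¹) := by simp only [mul_assoc]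
      _ = ↑w⁻¹ * u := by rw [w.mul_inv, mul_one]
  refine isUnit_iff_exists.mpr ⟨u * (↑w⁻¹ : M), ?_, ?_⟩
  · rw [← mul_assoc, ← hw, w.mul_inv]
  · rw [hswap, mul_assoc, ← hw, w.inv_mul]

variable {A : Type*} [CStarAlgebra A] [PartialOrder A] [StarOrderedRing A]

private lemma one_nonneg' : (0 : A) ≤ 1 := by
  have := star_mul_self_nonneg (1 : A)
  rwa [star_one, one_mul] at this

private lemma algebraMap_nonneg' {r : ℝ} (hr : 0 ≤ r) : (0 : A) ≤ algebraMap ℝ A r := by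
  rw [Algebra.algebraMap_eq_smul_one]
  exact smul_nonneg hr one_nonneg'

omit [PartialOrder A] [StarOrderedRing A] in
private lemma algebraMap_selfAdjoint' (r : ℝ) : star (algebraMap ℝ A r) = algebraMap ℝ A r := by
  simp [Algebra.algebraMap_eq_smul_one, star_smul]

private lemma algebraMap_mul_le_mul' {r : ℝ} (hr : 0 ≤ r) {p q : A} (h : p ≤ q) :
    algebraMap ℝ A r * p ≤ algebraMap ℝ A r * q := by
  set g : A := algebraMap ℝ A (Real.sqrt r) with hg
  have key : ∀ m : A, g * m * g = algebraMap ℝ A r * m := by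
    intro m
    rw [mul_assoc, ← Algebra.commutes (Real.sqrt r) m, ← mul_assoc, hg, ← _root_.map_mul,
      Real.mul_self_sqrt hr]
  have h2 := star_left_conjugate_le_conjugate h g
  rwa [show star g = g from algebraMap_selfAdjoint' _, key, key] at h2

end Helpers

section Schur

variable {A : Type*} [CStarAlgebra A] [PartialOrder A] [StarOrderedRing A]

private lemma schur_factor (e z a : A) (α : ℝ) (hα : 0 < α)
    (he : algebraMap ℝ A α ≤ e) (hz : ‖z‖ ≤ α) :
    ∃ y : Matrix (Fin 2) (Fin 2) A,
      !![e + a * star a, z; star z, e + star a * a] = star y * y ∧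
      (‖z‖ < α → IsUnit y) := by
  set x : A := e + a * star a with hxdef
  set w : A := e + star a * a with hwdef
  have hx1 : algebraMap ℝ A α ≤ x := he.trans (le_add_of_nonneg_right (mul_star_self_nonneg a))
  have hw1 : algebraMap ℝ A α ≤ w := he.trans (le_add_of_nonneg_right (star_mul_self_nonneg a))
  have hα0 : (0 : A) ≤ algebraMap ℝ A α := algebraMap_nonneg' hα.le
  have hx0 : (0 : A) ≤ x := hα0.trans hx1
  have hw0 : (0 : A) ≤ w := hα0.trans hw1
  have hαu : IsUnit (algebraMap ℝ A α) := (isUnit_iff_ne_zero.mpr hα.ne').map (algebraMap ℝ A)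
  obtain ⟨u, hu⟩ : IsUnit x := CStarAlgebra.isUnit_of_le _ hx1 ⟨hα0, hαu⟩
  set uα : Aˣ := ⟨algebraMap ℝ A α, algebraMap ℝ A α⁻¹,
    by rw [← _root_.map_mul, mul_inv_cancel₀ hα.ne', _root_.map_one],
    by rw [← _root_.map_mul, inv_mul_cancel₀ hα.ne', _root_.map_one]⟩ with huαdef
  have huinv_le : (↑u⁻¹ : A) ≤ algebraMap ℝ A α⁻¹ :=
    CStarAlgebra.inv_le_inv (a := uα) (b := u) hα0 (by rw [hu]; exact hx1)
  have huinv0 : (0 : A) ≤ (↑u⁻¹ : A) := CFC.inv_nonneg_of_nonneg u (hu ▸ hx0)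
  set S : A := w - star z * ↑u⁻¹ * z with hSdef
  have hq_le : star z * (↑u⁻¹ : A) * z ≤ algebraMap ℝ A (α⁻¹ * ‖z‖ ^ 2) := by
    calc star z * (↑u⁻¹ : A) * z ≤ star z * algebraMap ℝ A α⁻¹ * z :=
          star_left_conjugate_le_conjugate huinv_le z
      _ = algebraMap ℝ A α⁻¹ * (star z * z) := by
          rw [← Algebra.commutes α⁻¹ (star z), mul_assoc]
      _ ≤ algebraMap ℝ A α⁻¹ * algebraMap ℝ A (‖z‖ ^ 2) :=
          algebraMap_mul_le_mul' (inv_nonneg.2 hα.le) CStarAlgebra.star_mul_le_algebraMap_norm_sq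
      _ = algebraMap ℝ A (α⁻¹ * ‖z‖ ^ 2) := by rw [← _root_.map_mul]
  have hS1 : algebraMap ℝ A (α - α⁻¹ * ‖z‖ ^ 2) ≤ S := by
    rw [_root_.map_sub]
    exact sub_le_sub hw1 hq_le
  have hγle : α⁻¹ * ‖z‖ ^ 2 ≤ α := by
    have h2 : ‖z‖ ^ 2 ≤ α * α := by nlinarith [norm_nonneg z]
    calc α⁻¹ * ‖z‖ ^ 2 ≤ α⁻¹ * (α * α) := mul_le_mul_of_nonneg_left h2 (inv_nonneg.2 hα.le)
      _ = α := by field_simp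
  have hS0 : (0 : A) ≤ S := (algebraMap_nonneg' (sub_nonneg.2 hγle)).trans hS1
  set p : A := CFC.sqrt x with hpdef
  have hp2 : p * p = x := CFC.sqrt_mul_sqrt_self x hx0
  have hp0 : (0 : A) ≤ p := CFC.sqrt_nonneg (a := x)
  have hpsa : star p = p := (IsSelfAdjoint.of_nonneg hp0).star_eq
  obtain ⟨v, hv⟩ : IsUnit p := isUnit_of_mul_self' (by rw [hp2]; exact ⟨u, hu⟩)
  set q : A := CFC.sqrt S with hqdef
  have hq2 : q * q = S := CFC.sqrt_mul_sqrt_self S hS0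
  have hq0 : (0 : A) ≤ q := CFC.sqrt_nonneg (a := S)
  have hqsa : star q = q := (IsSelfAdjoint.of_nonneg hq0).star_eq
  have hvv : (v * v : Aˣ) = u := Units.ext (by rw [Units.val_mul, hv, hp2, hu])
  have hv2inv : (↑v⁻¹ : A) * ↑v⁻¹ = (↑u⁻¹ : A) := by
    rw [← hvv, _root_.mul_inv_rev, Units.val_mul]
  have hvp1 : (↑v⁻¹ : A) * p = 1 := by rw [← hv]; exact v.inv_mul
  have hpv1 : p * (↑v⁻¹ : A) = 1 := by rw [← hv]; exact v.mul_inv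
  have hvinvsa : star (↑v⁻¹ : A) = (↑v⁻¹ : A) := by
    have h3 : p * star (↑v⁻¹ : A) = 1 := by
      have h4 := congrArg star hvp1
      rwa [StarMul.star_mul, hpsa, star_one] at h4
    calc star (↑v⁻¹ : A) = ((↑v⁻¹ : A) * p) * star (↑v⁻¹ : A) := by rw [hvp1, one_mul]
      _ = (↑v⁻¹ : A) * (p * star (↑v⁻¹ : A)) := mul_assoc _ _ _
      _ = (↑v⁻¹ : A) := by rw [h3, mul_one]
  set y : Matrix (Fin 2) (Fin 2) A := !![p, ↑v⁻¹ * z; 0, q] with hydef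
  have hstar : star y = !![p, 0; star z * ↑v⁻¹, q] := by
    ext i j
    fin_cases i <;> fin_cases j <;>
      simp [hydef, Matrix.star_apply, hpsa, hqsa, StarMul.star_mul, hvinvsa]
  have h00 : p * p + 0 * 0 = x := by rw [hp2, mul_zero, add_zero]
  have h01 : p * (↑v⁻¹ * z) + 0 * q = z := by rw [← mul_assoc, hpv1, one_mul, zero_mul, add_zero]
  have h10 : star z * ↑v⁻¹ * p + q * 0 = star z := by
    rw [mul_assoc, hvp1, mul_one, mul_zero, add_zero]
  have h11 : star z * ↑v⁻¹ * (↑v⁻¹ * z) + q * q = w := by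
    rw [hq2, ← mul_assoc, mul_assoc (star z) _ _, hv2inv, hSdef]
    abel
  have hyy : star y * y = !![x, z; star z, w] := by
    rw [hstar, hydef, Matrix.mul_fin_two, h00, h01, h10, h11]
  refine ⟨y, hyy.symm, fun hzlt => ?_⟩
  have hβ : 0 < α - α⁻¹ * ‖z‖ ^ 2 := by
    have h2 : ‖z‖ ^ 2 < α * α := by nlinarith [norm_nonneg z]
    have h3 : α⁻¹ * ‖z‖ ^ 2 < α⁻¹ * (α * α) := mul_lt_mul_of_pos_left h2 (inv_pos.2 hα)
    have h4 : α⁻¹ * (α * α) = α := by field_simp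
    linarith
  have hSu : IsUnit S :=
    CStarAlgebra.isUnit_of_le _ hS1 ⟨(algebraMap_nonneg' hβ.le),
      ((isUnit_iff_ne_zero.mpr hβ.ne').map (algebraMap ℝ A))⟩
  obtain ⟨qq, hqq⟩ : IsUnit q := isUnit_of_mul_self' (by rw [hq2]; exact hSu)
  have hqq1 : q * (↑qq⁻¹ : A) = 1 := by rw [← hqq]; exact qq.mul_inv
  have hqq2 : (↑qq⁻¹ : A) * q = 1 := by rw [← hqq]; exact qq.inv_mul
  set N : Matrix (Fin 2) (Fin 2) A :=
    !![(↑v⁻¹ : A), -(↑v⁻¹ * (↑v⁻¹ * z) * ↑qq⁻¹); 0, (↑qq⁻¹ : A)] with hNdef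
  have e1 : p * ↑v⁻¹ + ↑v⁻¹ * z * 0 = 1 := by rw [hpv1, mul_zero, add_zero]
  have e2 : p * -(↑v⁻¹ * (↑v⁻¹ * z) * ↑qq⁻¹) + ↑v⁻¹ * z * ↑qq⁻¹ = 0 := by
    have hh : p * (↑v⁻¹ * (↑v⁻¹ * z) * ↑qq⁻¹) = ↑v⁻¹ * z * ↑qq⁻¹ := by
      rw [← mul_assoc, ← mul_assoc, hpv1, one_mul]
    rw [mul_neg, hh, neg_add_cancel]
  have e3 : (0 : A) * ↑v⁻¹ + q * 0 = 0 := by rw [zero_mul, mul_zero, add_zero]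
  have e4 : (0 : A) * -(↑v⁻¹ * (↑v⁻¹ * z) * ↑qq⁻¹) + q * ↑qq⁻¹ = 1 := by
    rw [zero_mul, hqq1, zero_add]
  have f1 : ↑v⁻¹ * p + -(↑v⁻¹ * (↑v⁻¹ * z) * ↑qq⁻¹) * 0 = 1 := by
    rw [hvp1, mul_zero, add_zero]
  have f2 : ↑v⁻¹ * (↑v⁻¹ * z) + -(↑v⁻¹ * (↑v⁻¹ * z) * ↑qq⁻¹) * q = 0 := by
    rw [neg_mul, mul_assoc, hqq2, mul_one, add_neg_cancel]
  have f3 : (0 : A) * p + ↑qq⁻¹ * 0 = 0 := by rw [zero_mul, mul_zero, add_zero]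
  have f4 : (0 : A) * (↑v⁻¹ * z) + ↑qq⁻¹ * q = 1 := by rw [zero_mul, hqq2, zero_add]
  refine isUnit_iff_exists.mpr ⟨N, ?_, ?_⟩
  · rw [hydef, hNdef, Matrix.mul_fin_two, e1, e2, e3, e4]
    exact Matrix.one_fin_two.symm
  · rw [hydef, hNdef, Matrix.mul_fin_two, f1, f2, f3, f4]
    exact Matrix.one_fin_two.symm

private lemma diag_factor (p q : A) (hp : 0 ≤ p) (hq : 0 ≤ q) :
    ∃ y : Matrix (Fin 2) (Fin 2) A, !![p, 0; 0, q] = star y * y := by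
  have hp2 := CFC.sqrt_mul_sqrt_self p hp
  have hq2 := CFC.sqrt_mul_sqrt_self q hq
  have hpsa : star (CFC.sqrt p) = CFC.sqrt p :=
    (IsSelfAdjoint.of_nonneg (CFC.sqrt_nonneg (a := p))).star_eq
  have hqsa : star (CFC.sqrt q) = CFC.sqrt q :=
    (IsSelfAdjoint.of_nonneg (CFC.sqrt_nonneg (a := q))).star_eq
  refine ⟨!![CFC.sqrt p, 0; 0, CFC.sqrt q], ?_⟩
  have hstar : star (!![CFC.sqrt p, 0; 0, CFC.sqrt q]) = !![CFC.sqrt p, 0; 0, CFC.sqrt q] := by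
    ext i j
    fin_cases i <;> fin_cases j <;> simp [Matrix.star_apply, hpsa, hqsa]
  rw [hstar, Matrix.mul_fin_two]
  simp [hp2, hq2]

end Schur


section Main

variable {A : Type*} [CStarAlgebra A] [PartialOrder A] [StarOrderedRing A]

private lemma localizer_sq (D a : A) (hD : IsSelfAdjoint D) (κ : ℝ) (c : ℝ) :
    oddLocalizer κ D a * oddLocalizer κ D a - c • (1 : Matrix (Fin 2) (Fin 2) A)
      = !![(κ ^ 2 • (D * D) - c • (1 : A)) + a * star a, κ • (D * a - a * D);
           star (κ • (D * a - a * D)), (κ ^ 2 • (D * D) - c • (1 : A)) + star a * a] := by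
  have key : (κ • D) * (κ • D) = κ ^ 2 • (D * D) := by rw [smul_mul_smul_comm, ← pow_two]
  ext i j
  rw [oddLocalizer, Matrix.mul_fin_two]
  fin_cases i <;> fin_cases j <;>
    simp [Matrix.one_apply, key, neg_mul_neg, star_smul, star_sub, StarMul.star_mul, hD.star_eq,
      star_trivial, mul_smul_comm, smul_mul_assoc, smul_sub, mul_neg, neg_mul] <;> module

omit [PartialOrder A] [StarOrderedRing A] in
private lemma smul_one_eq_algebraMap' (c : ℝ) : c • (1 : A) = algebraMap ℝ A c :=
  (Algebra.algebraMap_eq_smul_one c).symm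

end Main

/-- High-energy lower bound for the odd spectral localizer: if `D` is self-adjoint
with `D² ≥ ρ²·1`, then `L_κ² ≥ (κ²ρ² − κ‖[D,a]‖)·1` in `M₂(A)` (positivity being
expressed as being of the form `star y * y`); in particular, if
`κρ² ≥ 2‖[D,a]‖`, then `L_κ² ≥ (κ²ρ²/2)·1` and `L_κ` is invertible. -/
theorem oddLocalizer_highEnergy_sq_ge (A : Type*) [CStarAlgebra A]
    [PartialOrder A] [StarOrderedRing A] (D a : A) (hD : IsSelfAdjoint D)
    (ρ : ℝ) (hρ : 0 < ρ) (hD2 : ρ ^ 2 • (1 : A) ≤ D ^ 2) (κ : ℝ) (hκ : 0 < κ) :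
    (∃ y : Matrix (Fin 2) (Fin 2) A,
      oddLocalizer κ D a * oddLocalizer κ D a -
          ((κ ^ 2 * ρ ^ 2 - κ * ‖D * a - a * D‖) • (1 : Matrix (Fin 2) (Fin 2) A)) =
        star y * y) ∧
    (2 * ‖D * a - a * D‖ ≤ κ * ρ ^ 2 →
      (∃ y : Matrix (Fin 2) (Fin 2) A,
        oddLocalizer κ D a * oddLocalizer κ D a -
            ((κ ^ 2 * ρ ^ 2 / 2) • (1 : Matrix (Fin 2) (Fin 2) A)) =
          star y * y) ∧
      IsUnit (oddLocalizer κ D a)) := by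
  have hDD : algebraMap ℝ A (κ ^ 2 * ρ ^ 2) ≤ κ ^ 2 • (D * D) := by
    have h1 : ρ ^ 2 • (1 : A) ≤ D * D := by rw [← pow_two]; exact hD2
    have h2 := algebraMap_mul_le_mul' (r := κ ^ 2) (by positivity) h1
    rw [← Algebra.smul_def, ← Algebra.smul_def, smul_smul] at h2
    rw [Algebra.algebraMap_eq_smul_one]
    exact h2
  -- a generic helper for the lower diagonal bound
  have he_gen : ∀ c β : ℝ, κ ^ 2 * ρ ^ 2 - c = β →
      algebraMap ℝ A β ≤ κ ^ 2 • (D * D) - c • (1 : A) := by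
    intro c β hβ
    calc algebraMap ℝ A β = algebraMap ℝ A (κ ^ 2 * ρ ^ 2) - algebraMap ℝ A c := by
          rw [← _root_.map_sub, hβ]
      _ ≤ κ ^ 2 • (D * D) - algebraMap ℝ A c := sub_le_sub_right hDD _
      _ = κ ^ 2 • (D * D) - c • (1 : A) := by rw [smul_one_eq_algebraMap']
  have hb_norm : ‖κ • (D * a - a * D)‖ = κ * ‖D * a - a * D‖ := by
    rw [norm_smul, Real.norm_eq_abs, abs_of_pos hκ]
  constructor
  · by_cases ht : ‖D * a - a * D‖ = 0
    · -- commuting case: the matrix is diagonal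
      have hb0 : D * a - a * D = 0 := norm_eq_zero.mp ht
      rw [localizer_sq D a hD κ _, ht, hb0, smul_zero, star_zero]
      have he0 : (0 : A) ≤ κ ^ 2 • (D * D) - (κ ^ 2 * ρ ^ 2 - κ * 0) • (1 : A) :=
        (algebraMap_nonneg' (r := 0) le_rfl).trans (he_gen _ 0 (by ring))
      exact diag_factor _ _ (add_nonneg he0 (mul_star_self_nonneg a))
        (add_nonneg he0 (star_mul_self_nonneg a))
    · have htpos : 0 < ‖D * a - a * D‖ := lt_of_le_of_ne (norm_nonneg _) (Ne.symm ht)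
      obtain ⟨y, hy, -⟩ := schur_factor
        (κ ^ 2 • (D * D) - (κ ^ 2 * ρ ^ 2 - κ * ‖D * a - a * D‖) • (1 : A))
        (κ • (D * a - a * D)) a (κ * ‖D * a - a * D‖) (by positivity)
        (he_gen _ _ (by ring)) (le_of_eq hb_norm)
      rw [localizer_sq D a hD κ _]
      exact ⟨y, hy⟩
  · intro hyp
    have hble : κ * ‖D * a - a * D‖ ≤ κ ^ 2 * ρ ^ 2 / 2 := by
      nlinarith [mul_le_mul_of_nonneg_left hyp hκ.le]
    constructor
    · obtain ⟨y, hy, -⟩ := schur_factor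
        (κ ^ 2 • (D * D) - (κ ^ 2 * ρ ^ 2 / 2) • (1 : A))
        (κ • (D * a - a * D)) a (κ ^ 2 * ρ ^ 2 / 2) (by positivity)
        (he_gen _ _ (by ring)) (hb_norm.le.trans hble)
      rw [localizer_sq D a hD κ _]
      exact ⟨y, hy⟩
    · have hzlt : ‖κ • (D * a - a * D)‖ < κ ^ 2 * ρ ^ 2 := by
        rw [hb_norm]
        have hpos : 0 < κ ^ 2 * ρ ^ 2 := by positivity
        linarith
      obtain ⟨y, hy, hyu⟩ := schur_factor
        (κ ^ 2 • (D * D) - (0 : ℝ) • (1 : A))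
        (κ • (D * a - a * D)) a (κ ^ 2 * ρ ^ 2) (by positivity)
        (he_gen 0 _ (by ring)) hzlt.le
      have hLL : oddLocalizer κ D a * oddLocalizer κ D a = star y * y := by
        have h0 := localizer_sq D a hD κ 0
        rw [zero_smul, sub_zero] at h0
        exact h0.trans hy
      have hU : IsUnit (oddLocalizer κ D a * oddLocalizer κ D a) := by
        rw [hLL]
        exact (hyu hzlt).star.mul (hyu hzlt)
      exact isUnit_of_mul_self' hU
end

section
/- Let A be a unital C*-algebra, let γ ∈ A be a self-adjoint unitary, let D ∈ A be self-adjoint with Dγ = −γD, and let k ∈ A be self-adjoint and invertible with kγ = γk. Set g := ‖k⁻¹‖⁻¹ and let κ > 0 satisfy κ‖Dk − kD‖ < g². Then for every t ∈ [0,1], the self-adjoint element kγ + tκD satisfies (kγ + tκD)² ≥ (g² − κ‖Dk − kD‖)·1; in particular kγ + tκD is invertible. -/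
lemma isUnit_of_isUnit_sq' {M : Type*} [Monoid M] {a : M} (h : IsUnit (a * a)) : IsUnit a := by
  obtain ⟨u, hu⟩ := h
  have hc : Commute a ↑u := by
    rw [hu]; exact (Commute.refl a).mul_right (Commute.refl a)
  have hc' : Commute a ↑u⁻¹ := hc.units_inv_right
  refine isUnit_iff_exists.mpr ⟨a * ↑u⁻¹, ?_, ?_⟩
  · rw [← mul_assoc, ← hu, Units.mul_inv]
  · rw [hc'.eq, mul_assoc, ← hu, Units.inv_mul]

/-- The straight-line path from `kγ` to the even spectral localizer `κD + kγ` stays in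
the invertibles for small `κ`: if `γ` is a self-adjoint unitary, `D` self-adjoint with
`Dγ = −γD`, `k` self-adjoint invertible with `kγ = γk`, `g = ‖k⁻¹‖⁻¹` and
`κ‖[D,k]‖ < g²`, then for every `t ∈ [0,1]` the self-adjoint element `kγ + tκD`
satisfies `(kγ + tκD)² ≥ (g² − κ‖[D,k]‖)·1` and is invertible. -/
theorem evenLocalizer_path_invertible (A : Type*) [CStarAlgebra A]
    [PartialOrder A] [StarOrderedRing A] (γ D k : A)
    (hγ : star γ = γ) (hγ2 : γ * γ = 1) (hD : IsSelfAdjoint D)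
    (hDγ : D * γ = -(γ * D)) (hk : IsSelfAdjoint k) (hk' : IsUnit k)
    (hkγ : k * γ = γ * k) (κ : ℝ) (hκ : 0 < κ)
    (hsmall : κ * ‖D * k - k * D‖ < ‖Ring.inverse k‖⁻¹ ^ 2) :
    ∀ t ∈ Set.Icc (0 : ℝ) 1,
      IsSelfAdjoint (k * γ + (t * κ) • D) ∧
      (‖Ring.inverse k‖⁻¹ ^ 2 - κ * ‖D * k - k * D‖) • (1 : A) ≤ (k * γ + (t * κ) • D) ^ 2 ∧
      IsUnit (k * γ + (t * κ) • D) := by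
  rcases subsingleton_or_nontrivial A with hA | hA
  · intro t _
    exact ⟨Subsingleton.elim _ _, le_of_eq (Subsingleton.elim _ _), isUnit_of_subsingleton _⟩
  intro t ht
  obtain ⟨ht0, ht1⟩ := ht
  set b := Ring.inverse k with hbdef
  have hbk : b * k = 1 := Ring.inverse_mul_cancel k hk'
  have hkb : k * b = 1 := Ring.mul_inverse_cancel k hk'
  have hbsa : IsSelfAdjoint b := by
    have h1 : star b * k = 1 := by
      have := congrArg star hkb
      rwa [star_mul, hk.star_eq, star_one] at this
    calc star b = star b * (k * b) := by rw [hkb, mul_one]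
      _ = (star b * k) * b := by rw [mul_assoc]
      _ = b := by rw [h1, one_mul]
  have hbne : b ≠ 0 := by
    intro h
    apply one_ne_zero (α := A)
    rw [← hbk, h, zero_mul]
  have hbnorm : 0 < ‖b‖ := norm_pos_iff.mpr hbne
  set c := D * k - k * D with hcdef
  set s := t * κ with hsdef
  have hs0 : 0 ≤ s := mul_nonneg ht0 hκ.le
  have hsκ : s ≤ κ := by
    calc s = t * κ := rfl
      _ ≤ 1 * κ := by nlinarith
      _ = κ := one_mul κ
  -- γ anticommutes with D
  have hγD : γ * D = -(D * γ) := by rw [hDγ, neg_neg]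
  -- c * γ is self-adjoint
  have hγc : γ * c = -(c * γ) := by
    simp only [hcdef, mul_sub, sub_mul]
    rw [show γ * (D * k) = -(D * (k * γ)) by rw [← mul_assoc, hγD, neg_mul, mul_assoc, hkγ],
        show γ * (k * D) = -(k * (D * γ)) by
          rw [← mul_assoc, ← hkγ, mul_assoc, hγD, mul_neg]]
    rw [mul_assoc, mul_assoc]
    abel
  have hcsa : IsSelfAdjoint (c * γ) := by
    have hstarc : star c = -c := by
      simp only [hcdef, star_sub, star_mul, hD.star_eq, hk.star_eq]
      abel
    rw [IsSelfAdjoint, star_mul, hγ, hstarc, mul_neg, hγc, neg_neg]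
  set L := k * γ + s • D with hLdef
  have hLsa : IsSelfAdjoint L := by
    rw [IsSelfAdjoint, hLdef, star_add, star_smul, star_mul, hγ, hk.star_eq, hkγ,
      hD.star_eq, star_trivial]
  -- expansion of L^2
  have hexp : L ^ 2 = k * k + s • (c * γ) + (s * s) • (D * D) := by
    have e1 : k * γ * (k * γ) = k * k := by
      rw [show k * γ * (k * γ) = k * (γ * k) * γ by noncomm_ring,
        ← hkγ, show k * (k * γ) * γ = (k * k) * (γ * γ) by noncomm_ring, hγ2, mul_one]
    have e2 : k * γ * D = -(k * D * γ) := by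
      rw [mul_assoc, hγD, mul_neg, mul_assoc]
    have e3 : D * (k * γ) = D * k * γ := by rw [mul_assoc]
    have hcγ : c * γ = D * k * γ - k * D * γ := by rw [hcdef, sub_mul]
    rw [pow_two, hLdef, hcγ]
    simp only [mul_add, add_mul, smul_mul_assoc, mul_smul_comm, smul_smul, e1, e2, e3,
      smul_neg, smul_sub, smul_add, smul_smul]
    abel
  -- lower bound for k * k
  have hg2 : (‖b‖⁻¹ ^ 2) • (1 : A) ≤ k * k := by
    have h1 : b * b ≤ (‖b‖ ^ 2) • (1 : A) := by
      have := CStarAlgebra.star_mul_le_algebraMap_norm_sq (a := b) (A := A)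
      rwa [hbsa.star_eq, Algebra.algebraMap_eq_smul_one] at this
    have h2 : k * (b * b) * k ≤ k * ((‖b‖ ^ 2) • (1 : A)) * k :=
      hk.conjugate_le_conjugate h1
    have h3 : k * (b * b) * k = 1 := by
      rw [show k * (b * b) * k = (k * b) * (b * k) by noncomm_ring, hkb, hbk, one_mul]
    have h4 : k * ((‖b‖ ^ 2) • (1 : A)) * k = (‖b‖ ^ 2) • (k * k) := by
      rw [mul_smul_comm, smul_mul_assoc, mul_one]
    rw [h3, h4] at h2
    have h5 := smul_le_smul_of_nonneg_left h2 (by positivity : (0:ℝ) ≤ ‖b‖⁻¹ ^ 2)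
    rwa [smul_smul, show ‖b‖⁻¹ ^ 2 * ‖b‖ ^ 2 = 1 by
      field_simp, one_smul] at h5
  -- lower bound for the cross term
  have hcross : (-(s * ‖c‖)) • (1 : A) ≤ s • (c * γ) := by
    have hγnorm : ‖γ‖ ≤ 1 := by
      have h1 : ‖γ‖ * ‖γ‖ = ‖(1 : A)‖ := by
        rw [← hγ2, ← CStarRing.norm_star_mul_self (x := γ), hγ]
      have h2 : ‖(1 : A)‖ = 1 := norm_one
      nlinarith [norm_nonneg γ]
    have hnorm : ‖c * γ‖ ≤ ‖c‖ := by
      calc ‖c * γ‖ ≤ ‖c‖ * ‖γ‖ := norm_mul_le c γ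
        _ ≤ ‖c‖ * 1 := by nlinarith [norm_nonneg c]
        _ = ‖c‖ := mul_one _
    have h1 : (-‖c * γ‖) • (1 : A) ≤ c * γ := by
      have := hcsa.neg_algebraMap_norm_le_self
      rwa [Algebra.algebraMap_eq_smul_one, ← neg_smul] at this
    have h2 : (-‖c‖) • (1 : A) ≤ (-‖c * γ‖) • (1 : A) := by
      apply smul_le_smul_of_nonneg_right _ zero_le_one
      linarith
    have h3 := smul_le_smul_of_nonneg_left (h2.trans h1) hs0
    rw [smul_smul] at h3
    rwa [mul_neg] at h3
  have hDD : (0 : A) ≤ (s * s) • (D * D) := by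
    have : (0 : A) ≤ D * D := by
      have := star_mul_self_nonneg D
      rwa [hD.star_eq] at this
    exact smul_nonneg (mul_self_nonneg s) this
  -- main inequality
  have hmain : (‖b‖⁻¹ ^ 2 - κ * ‖c‖) • (1 : A) ≤ L ^ 2 := by
    rw [hexp]
    have h0 : (‖b‖⁻¹ ^ 2 - κ * ‖c‖) • (1 : A) ≤ (‖b‖⁻¹ ^ 2 + -(s * ‖c‖)) • (1 : A) := by
      apply smul_le_smul_of_nonneg_right _ zero_le_one
      have : s * ‖c‖ ≤ κ * ‖c‖ := mul_le_mul_of_nonneg_right hsκ (norm_nonneg c)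
      linarith
    refine h0.trans ?_
    calc (‖b‖⁻¹ ^ 2 + -(s * ‖c‖)) • (1 : A)
        = (‖b‖⁻¹ ^ 2) • (1 : A) + (-(s * ‖c‖)) • (1 : A) := by rw [add_smul]
      _ ≤ k * k + s • (c * γ) := add_le_add hg2 hcross
      _ = k * k + s • (c * γ) + 0 := by rw [add_zero]
      _ ≤ k * k + s • (c * γ) + (s * s) • (D * D) := add_le_add le_rfl hDD
  refine ⟨hLsa, hmain, ?_⟩
  -- invertibility
  set ε := ‖b‖⁻¹ ^ 2 - κ * ‖c‖ with hεdef
  have hε : 0 < ε := by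
    rw [hεdef]
    linarith [hsmall]
  have hεunit : IsUnit (ε • (1 : A)) := by
    rw [← Algebra.algebraMap_eq_smul_one]
    exact (IsUnit.mk0 ε hε.ne').map (algebraMap ℝ A)
  have hεnn : (0 : A) ≤ ε • (1 : A) := smul_nonneg hε.le zero_le_one
  have hL2 : IsUnit (L ^ 2) := CStarAlgebra.isUnit_of_le _ hmain (hεunit.isStrictlyPositive hεnn)
  rw [pow_two] at hL2
  exact isUnit_of_isUnit_sq' hL2
end

section
/- Let A be a unital C*-algebra, let P ∈ A be a projection and write P̄ := 1 − P. Let L ∈ A be self-adjoint and suppose there are α, β > 0 with (P L P)² ≥ α² P and (P̄ L P̄)² ≥ β² P̄, and that the off-diagonal part Y := P L P̄ + P̄ L P satisfies ‖Y‖² < α β. Then L is invertible in A. -/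
private lemma isUnit_of_isUnit_sq {A : Type*} [Ring A] {a : A} (hu : IsUnit (a * a)) :
    IsUnit a := by
  obtain ⟨c, hc1, hc2⟩ := isUnit_iff_exists.mp hu
  have hca : c * a = a * c := by
    calc c * a = c * a * ((a * a) * c) := by rw [hc1, mul_one]
      _ = c * (a * a) * (a * c) := by simp only [mul_assoc]
      _ = a * c := by rw [hc2, one_mul]
  refine isUnit_iff_exists.mpr ⟨a * c, ?_, ?_⟩
  · rw [← mul_assoc, hc1]
  · rw [mul_assoc, hca, ← mul_assoc, hc1]

set_option maxHeartbeats 1000000 in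
/-- Block-decoupling invertibility criterion: let `P` be a projection in a unital
C*-algebra, `L` self-adjoint, and suppose `(PLP)² ≥ α²P`, `((1−P)L(1−P))² ≥ β²(1−P)`
for some `α, β > 0`, while the off-diagonal part `Y = PL(1−P) + (1−P)LP` satisfies
`‖Y‖² < αβ`. Then `L` is invertible. -/
theorem isUnit_of_block_decoupling (A : Type*) [CStarAlgebra A]
    [PartialOrder A] [StarOrderedRing A] (P L : A)
    (hP : star P = P) (hP2 : P * P = P) (hL : IsSelfAdjoint L)
    (α β : ℝ) (hα : 0 < α) (hβ : 0 < β)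
    (h1 : α ^ 2 • P ≤ (P * L * P) ^ 2)
    (h2 : β ^ 2 • ((1 : A) - P) ≤ ((1 - P) * L * (1 - P)) ^ 2)
    (hY : ‖P * L * (1 - P) + (1 - P) * L * P‖ ^ 2 < α * β) :
    IsUnit L := by
  set Q : A := 1 - P with hQdef
  have hQ : star Q = Q := by simp [hQdef, hP]
  have hPQ : P * Q = 0 := by simp [hQdef, mul_sub, hP2]
  have hQP : Q * P = 0 := by simp [hQdef, sub_mul, hP2]
  have hQ2 : Q * Q = Q := by simp [hQdef, mul_sub, sub_mul, hP2]
  have hPQ1 : P + Q = 1 := by rw [hQdef]; abel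
  -- scalars
  have hαβ : (0:ℝ) < α * β := mul_pos hα hβ
  set u : ℝ := Real.sqrt (β / α) with hu_def
  have hu : 0 < u := Real.sqrt_pos.mpr (div_pos hβ hα)
  have hu2 : u * u = β / α := Real.mul_self_sqrt (div_pos hβ hα).le
  set v : ℝ := Real.sqrt u with hv_def
  have hv : 0 < v := Real.sqrt_pos.mpr hu
  have hv2 : v * v = u := Real.mul_self_sqrt hu.le
  set w : ℝ := v⁻¹ with hw_def
  have hvw : v * w = 1 := mul_inv_cancel₀ hv.ne'
  have hwv : w * v = 1 := inv_mul_cancel₀ hv.ne'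
  have hww : w * w = u⁻¹ := by rw [hw_def, ← mul_inv, hv2]
  -- the conjugating element
  set D : A := v • P + w • Q with hD_def
  set E : A := w • P + v • Q with hE_def
  have hDE : D * E = 1 := by
    simp only [hD_def, hE_def, mul_add, add_mul, smul_mul_assoc, mul_smul_comm, smul_smul,
      hP2, hPQ, hQP, hQ2, hvw, hwv, smul_zero, one_smul, add_zero, zero_add]
    exact hPQ1
  have hED : E * D = 1 := by
    simp only [hE_def, hD_def, mul_add, add_mul, smul_mul_assoc, mul_smul_comm, smul_smul,
      hP2, hPQ, hQP, hQ2, hvw, hwv, smul_zero, one_smul, add_zero, zero_add]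
    exact hPQ1
  have hEunit : IsUnit E := isUnit_iff_exists.mpr ⟨D, hED, hDE⟩
  -- blocks
  set X : A := u • (P * L * P) + u⁻¹ • (Q * L * Q) with hX_def
  set Y : A := P * L * Q + Q * L * P with hY_def
  have hM : D * L * D = X + Y := by
    simp only [hD_def, hX_def, hY_def, mul_add, add_mul, smul_mul_assoc, mul_smul_comm,
      smul_add, smul_smul, hvw, hwv, one_smul, hv2, hww]
    module
  -- self-adjointness
  have hXsa : star X = X := by
    simp [hX_def, star_smul, star_mul, hP, hQ, hL.star_eq, mul_assoc]
  have hYsa : star Y = Y := by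
    simp only [hY_def, star_add, star_mul, hP, hQ, hL.star_eq, mul_assoc]
    abel
  -- lower bound on X * X
  have hcross1 : (P * L * P) * (Q * L * Q) = 0 := by
    rw [show (P * L * P) * (Q * L * Q) = P * L * (P * Q) * (L * Q) by noncomm_ring, hPQ]
    simp
  have hcross2 : (Q * L * Q) * (P * L * P) = 0 := by
    rw [show (Q * L * Q) * (P * L * P) = Q * L * (Q * P) * (L * P) by noncomm_ring, hQP]
    simp
  have hXX : X * X = (u * u) • ((P * L * P) * (P * L * P))
      + (u⁻¹ * u⁻¹) • ((Q * L * Q) * (Q * L * Q)) := by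
    simp only [hX_def, mul_add, add_mul, smul_mul_assoc, mul_smul_comm, smul_smul,
      hcross1, hcross2, smul_zero, add_zero, zero_add]
  rw [pow_two (P * L * P)] at h1
  rw [pow_two (Q * L * Q)] at h2
  have ha2 : (α * β) • P ≤ (u * u) • ((P * L * P) * (P * L * P)) := by
    have := smul_le_smul_of_nonneg_left h1 (mul_nonneg hu.le hu.le)
    rw [smul_smul] at this
    have heq : u * u * α ^ 2 = α * β := by
      rw [hu2]; field_simp
    rwa [heq] at this
  have hb2 : (α * β) • Q ≤ (u⁻¹ * u⁻¹) • ((Q * L * Q) * (Q * L * Q)) := by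
    have := smul_le_smul_of_nonneg_left h2
      (mul_nonneg (inv_nonneg.mpr hu.le) (inv_nonneg.mpr hu.le))
    rw [smul_smul] at this
    have heq : u⁻¹ * u⁻¹ * β ^ 2 = α * β := by
      rw [← mul_inv, hu2]; field_simp
    rwa [heq] at this
  have hX2 : (α * β) • (1 : A) ≤ X * X := by
    rw [hXX, ← hPQ1, smul_add]
    exact add_le_add ha2 hb2
  -- upper bound on Y * Y
  set y : ℝ := ‖Y‖ with hy_def
  have hy0 : 0 ≤ y := norm_nonneg Y
  have hYY : Y * Y ≤ (y ^ 2) • (1 : A) := by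
    have := CStarAlgebra.star_mul_le_algebraMap_norm_sq (a := Y)
    rwa [hYsa, Algebra.algebraMap_eq_smul_one] at this
  -- scalar bookkeeping
  set g : ℝ := Real.sqrt (α * β) with hg_def
  have hg : 0 < g := Real.sqrt_pos.mpr hαβ
  have hg2 : g * g = α * β := Real.mul_self_sqrt hαβ.le
  have hyg : y < g := by
    have h' : y ^ 2 < g ^ 2 := by rw [pow_two g, hg2]; exact hY
    exact lt_of_pow_lt_pow_left₀ 2 hg.le h'
  set s : ℝ := (y + g) / (2 * g) with hs_def
  have hs0 : 0 < s := div_pos (by linarith) (by linarith)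
  have hs1 : s < 1 := by
    rw [hs_def, div_lt_one (by linarith)]; linarith
  have hsinv : s⁻¹ = (2 * g) / (y + g) := by
    rw [hs_def, inv_div]
  set ε : ℝ := (1 - s) * (α * β) + (1 - s⁻¹) * y ^ 2 with hε_def
  have hε : 0 < ε := by
    have hyg' : (0:ℝ) < y + g := by linarith
    have h2g : (0:ℝ) < 2 * g := by linarith
    have key : (1 - (y + g) / (2 * g)) * (g * g) + (1 - 2 * g / (y + g)) * y ^ 2
        = (g - y) ^ 2 * (g + 2 * y) / (2 * (y + g)) := by
      field_simp
      ring
    rw [hε_def, hsinv, hs_def, ← hg2, key]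
    exact div_pos (mul_pos (pow_pos (sub_pos.mpr hyg) 2) (by linarith)) (by positivity)
  -- Cauchy–Schwarz style bound on the cross term
  set r : ℝ := Real.sqrt s with hr_def
  have hr : 0 < r := Real.sqrt_pos.mpr hs0
  have hr2 : r * r = s := Real.mul_self_sqrt hs0.le
  have hrr : r⁻¹ * r⁻¹ = s⁻¹ := by rw [← mul_inv, hr2]
  set c : A := r • X + r⁻¹ • Y with hc_def
  have hcsa : star c = c := by
    simp [hc_def, star_smul, hXsa, hYsa]
  have hkey : (0:A) ≤ s • (X * X) + (X * Y + Y * X) + s⁻¹ • (Y * Y) := by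
    have h0 : (0:A) ≤ star c * c := star_mul_self_nonneg c
    rw [hcsa] at h0
    have hcc : c * c = (r * r) • (X * X) + (X * Y + Y * X) + (r⁻¹ * r⁻¹) • (Y * Y) := by
      simp only [hc_def, mul_add, add_mul, smul_add, smul_mul_assoc, mul_smul_comm, smul_smul,
        mul_inv_cancel₀ hr.ne', inv_mul_cancel₀ hr.ne', one_smul]
      module
    rwa [hcc, hr2, hrr] at h0
  have t2 : ((1 - s) * (α * β)) • (1:A) ≤ (1 - s) • (X * X) := by
    have := smul_le_smul_of_nonneg_left hX2 (by linarith : (0:ℝ) ≤ 1 - s)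
    rwa [smul_smul] at this
  have t3 : ((1 - s⁻¹) * y ^ 2) • (1:A) ≤ (1 - s⁻¹) • (Y * Y) := by
    have hss : s * s⁻¹ = 1 := mul_inv_cancel₀ hs0.ne'
    have hsinvpos : 0 < s⁻¹ := inv_pos.mpr hs0
    have hsle : 1 - s⁻¹ ≤ 0 := by nlinarith
    have := smul_le_smul_of_nonpos_left hYY hsle
    rwa [smul_smul] at this
  have hMM : ε • (1:A) ≤ (X + Y) * (X + Y) := by
    have hsum := add_le_add (add_le_add t2 t3) hkey
    calc ε • (1:A) = ((1 - s) * (α * β)) • (1:A) + ((1 - s⁻¹) * y ^ 2) • (1:A) + 0 := by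
          rw [hε_def, add_zero, add_smul]
      _ ≤ (1 - s) • (X * X) + (1 - s⁻¹) • (Y * Y)
            + (s • (X * X) + (X * Y + Y * X) + s⁻¹ • (Y * Y)) := hsum
      _ = (X + Y) * (X + Y) := by
          simp only [mul_add, add_mul]
          module
  have hMMunit : IsUnit ((X + Y) * (X + Y)) := by
    refine CStarAlgebra.isUnit_of_le (a := ε • (1:A)) hMM
      (IsStrictlyPositive.iff_of_unital.mpr (And.symm ⟨?_, ?_⟩))
    · have h' : IsUnit (algebraMap ℝ A ε) :=
        (isUnit_iff_ne_zero.mpr hε.ne').map (algebraMap ℝ A)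
      rwa [Algebra.algebraMap_eq_smul_one] at h'
    · exact smul_nonneg hε.le zero_le_one
  have hMunit : IsUnit (X + Y) := isUnit_of_isUnit_sq hMMunit
  have hL' : L = E * (D * L * D) * E := by
    calc L = 1 * L * 1 := by rw [one_mul, mul_one]
      _ = (E * D) * L * (D * E) := by rw [hED, hDE]
      _ = E * (D * L * D) * E := by simp only [mul_assoc]
  rw [hL', hM]
  exact (hEunit.mul hMunit).mul hEunit
end

section
/- Let A be a unital C*-algebra and let f : ℝ → ℝ be the bounded transform f(x) = x(1 + x²)^{−1/2}. There exists a constant C > 0 such that for all self-adjoint S, T ∈ A one has ‖f(S) − f(T)‖ ≤ C ‖S − T‖, where f(S), f(T) are defined by the continuous functional calculus. -/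
open MeasureTheory Real Set

namespace BoundedTransformAux

/-! ### Scalar integral lemmas -/

lemma integrable_inv_add_sq {b : ℝ} (hb : 1 ≤ b) :
    IntegrableOn (fun l : ℝ => (b + l ^ 2)⁻¹) (Ioi 0) := by
  have h0 : ∀ l : ℝ, 0 < b + l ^ 2 := fun l => by nlinarith [sq_nonneg l]
  refine (integrable_inv_one_add_sq.restrict (s := Ioi 0)).mono' ?_ ?_
  · exact (Continuous.aestronglyMeasurable
      (by fun_prop (disch := intro l; exact (h0 l).ne')))
  · filter_upwards with l
    rw [norm_inv, Real.norm_of_nonneg (le_of_lt (h0 l))]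
    have : (1:ℝ) + l ^ 2 ≤ b + l ^ 2 := by linarith
    exact inv_anti₀ (by positivity) this

lemma integral_inv_add_sq {b : ℝ} (hb : 1 ≤ b) :
    ∫ l in Ioi (0:ℝ), (b + l ^ 2)⁻¹ = π / (2 * Real.sqrt b) := by
  set s := Real.sqrt b with hs
  have hs0 : 0 < s := Real.sqrt_pos.mpr (by linarith)
  have hsb : s ^ 2 = b := Real.sq_sqrt (by linarith)
  have hderiv : ∀ l ∈ Ioi (0:ℝ),
      HasDerivAt (fun l : ℝ => s⁻¹ * Real.arctan (l / s)) ((b + l ^ 2)⁻¹) l := by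
    intro l _
    have h1 : HasDerivAt (fun l : ℝ => l / s) (1 / s) l := by
      simpa using (hasDerivAt_id l).div_const s
    have h2 := (Real.hasDerivAt_arctan (l / s)).comp l h1
    have h3 := h2.const_mul s⁻¹
    refine (h3.congr_deriv ?_ : HasDerivAt _ _ l)
    field_simp
    rw [← hsb]
  have htend : Filter.Tendsto (fun l : ℝ => s⁻¹ * Real.arctan (l / s)) Filter.atTop
      (nhds (s⁻¹ * (π / 2))) := by
    have : Filter.Tendsto (fun l : ℝ => l / s) Filter.atTop Filter.atTop :=
      Filter.tendsto_id.atTop_div_const hs0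
    exact ((Real.tendsto_arctan_atTop.mono_right nhdsWithin_le_nhds).comp this).const_mul _
  have hc : Continuous (fun l : ℝ => s⁻¹ * Real.arctan (l / s)) :=
    continuous_const.mul (Real.continuous_arctan.comp (continuous_id.div_const s))
  have hcont : ContinuousWithinAt (fun l : ℝ => s⁻¹ * Real.arctan (l / s)) (Ici 0) 0 :=
    hc.continuousWithinAt
  rw [integral_Ioi_of_hasDerivAt_of_tendsto hcont hderiv (integrable_inv_add_sq hb) htend]
  simp [hs0.ne']
  ring

/-! ### Resolvent-type elements via cfc -/

variable {A : Type*} [CStarAlgebra A]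

noncomputable def rsv (c : ℝ) (a : A) : A := cfc (fun x : ℝ => (c + x ^ 2)⁻¹) a
noncomputable def sav (c : ℝ) (a : A) : A := cfc (fun x : ℝ => x * (c + x ^ 2)⁻¹) a

variable {c : ℝ} (hc : 1 ≤ c) {a : A} (ha : IsSelfAdjoint a)

include hc in
lemma cpos : ∀ x : ℝ, 0 < c + x ^ 2 := fun x => by nlinarith [sq_nonneg x]

include hc in
lemma cont_r : Continuous (fun x : ℝ => (c + x ^ 2)⁻¹) := by
  fun_prop (disch := intro x; exact (cpos hc x).ne')

include hc in
lemma cont_s : Continuous (fun x : ℝ => x * (c + x ^ 2)⁻¹) := by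
  fun_prop (disch := intro x; exact (cpos hc x).ne')

include hc ha in
lemma rsv_mul_right : rsv c a * (c • (1 : A) + a ^ 2) = 1 := by
  have key : c • (1 : A) + a ^ 2 = cfc (fun x : ℝ => c + x ^ 2) a := by
    rw [cfc_const_add c (fun x : ℝ => x ^ 2) a, cfc_pow_id a 2,
      Algebra.algebraMap_eq_smul_one]
  rw [rsv, key, ← cfc_mul (fun x : ℝ => (c + x ^ 2)⁻¹) (fun x : ℝ => c + x ^ 2) a
    (cont_r hc).continuousOn (by fun_prop)]
  have : (fun x : ℝ => (c + x ^ 2)⁻¹ * (c + x ^ 2)) = fun _ : ℝ => (1:ℝ) := by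
    ext x; exact inv_mul_cancel₀ (cpos hc x).ne'
  rw [this]
  exact cfc_one (R := ℝ) a

include hc ha in
lemma rsv_mul_left : (c • (1 : A) + a ^ 2) * rsv c a = 1 := by
  have key : c • (1 : A) + a ^ 2 = cfc (fun x : ℝ => c + x ^ 2) a := by
    rw [cfc_const_add c (fun x : ℝ => x ^ 2) a, cfc_pow_id a 2,
      Algebra.algebraMap_eq_smul_one]
  rw [rsv, key, ← cfc_mul (fun x : ℝ => c + x ^ 2) (fun x : ℝ => (c + x ^ 2)⁻¹) a
    (by fun_prop) (cont_r hc).continuousOn]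
  have : (fun x : ℝ => (c + x ^ 2) * (c + x ^ 2)⁻¹) = fun _ : ℝ => (1:ℝ) := by
    ext x; exact mul_inv_cancel₀ (cpos hc x).ne'
  rw [this]
  exact cfc_one (R := ℝ) a

include hc ha in
lemma sav_eq_mul : sav c a = a * rsv c a := by
  rw [sav, rsv, cfc_mul (fun x : ℝ => x) (fun x : ℝ => (c + x ^ 2)⁻¹) a
    (by fun_prop) (cont_r hc).continuousOn, cfc_id' ℝ a]

include hc ha in
lemma sav_eq_mul' : sav c a = rsv c a * a := by
  have : (fun x : ℝ => x * (c + x ^ 2)⁻¹) = fun x : ℝ => (c + x ^ 2)⁻¹ * x := by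
    ext x; ring
  rw [sav, rsv, this, cfc_mul (fun x : ℝ => (c + x ^ 2)⁻¹) (fun x : ℝ => x) a
    (cont_r hc).continuousOn (by fun_prop), cfc_id' ℝ a]

include hc in
lemma norm_rsv_le : ‖rsv c a‖ ≤ c⁻¹ := by
  apply norm_cfc_le (by positivity)
  intro x _
  rw [Real.norm_eq_abs, abs_inv, abs_of_pos (cpos hc x)]
  exact inv_anti₀ (by linarith) (by nlinarith [sq_nonneg x])

include hc in
lemma norm_sav_le : ‖sav c a‖ ≤ (2 * Real.sqrt c)⁻¹ := by
  have hs0 : 0 < Real.sqrt c := Real.sqrt_pos.mpr (by linarith)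
  have hsb : Real.sqrt c ^ 2 = c := Real.sq_sqrt (by linarith)
  apply norm_cfc_le (by positivity)
  intro x _
  rw [Real.norm_eq_abs, abs_mul, abs_inv, abs_of_pos (cpos hc x)]
  calc |x| * (c + x ^ 2)⁻¹ = |x| / (c + x ^ 2) := by rw [div_eq_mul_inv]
    _ ≤ 1 / (2 * Real.sqrt c) := by
        rw [div_le_div_iff₀ (cpos hc x) (by positivity)]
        nlinarith [sq_nonneg (Real.sqrt c - |x|), sq_abs x]
    _ = (2 * Real.sqrt c)⁻¹ := one_div _

section two
variable {S T : A} (hS : IsSelfAdjoint S) (hT : IsSelfAdjoint T)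

include hc hS hT in
lemma sav_sub_eq : sav c S - sav c T
    = c • (rsv c S * (S - T) * rsv c T) + sav c S * (T - S) * sav c T := by
  have h1 : sav c S - sav c T
      = rsv c S * (S * (c • (1:A) + T ^ 2) - (c • (1:A) + S ^ 2) * T) * rsv c T := by
    have e1 : sav c S = rsv c S * (S * (c • (1:A) + T ^ 2)) * rsv c T := by
      rw [mul_assoc, mul_assoc, rsv_mul_left hc hT, mul_one, ← sav_eq_mul' hc hS]
    have e2 : sav c T = rsv c S * ((c • (1:A) + S ^ 2) * T) * rsv c T := by
      rw [← mul_assoc, rsv_mul_right hc hS, one_mul, ← sav_eq_mul hc hT]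
    rw [e1, e2, ← sub_mul, ← mul_sub]
  have h2 : S * (c • (1:A) + T ^ 2) - (c • (1:A) + S ^ 2) * T
      = c • (S - T) + S * ((T - S) * T) := by
    simp only [mul_add, add_mul, mul_smul_comm, smul_mul_assoc, mul_one, one_mul,
      smul_sub, mul_sub, sub_mul, pow_two]
    abel_nf
    noncomm_ring
  rw [h1, h2]
  rw [mul_add, add_mul, mul_smul_comm, smul_mul_assoc]
  congr 1
  rw [sav_eq_mul' hc hS, sav_eq_mul hc hT]
  noncomm_ring

include hc hS hT in
lemma norm_sav_sub_le : ‖sav c S - sav c T‖ ≤ 2 * c⁻¹ * ‖S - T‖ := by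
  have hc0 : (0:ℝ) < c := by linarith
  have hs0 : 0 < Real.sqrt c := Real.sqrt_pos.mpr hc0
  have hsb : Real.sqrt c * Real.sqrt c = c := Real.mul_self_sqrt hc0.le
  rw [sav_sub_eq hc hS hT]
  have b1 : ‖rsv c S * (S - T) * rsv c T‖ ≤ c⁻¹ * ‖S - T‖ * c⁻¹ := by
    calc ‖rsv c S * (S - T) * rsv c T‖ ≤ ‖rsv c S‖ * ‖S - T‖ * ‖rsv c T‖ := by
          refine (norm_mul_le _ _).trans ?_
          gcongr
          exact norm_mul_le _ _
      _ ≤ c⁻¹ * ‖S - T‖ * c⁻¹ := by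
          gcongr
          exacts [norm_rsv_le hc, norm_rsv_le hc]
  have b2 : ‖sav c S * (T - S) * sav c T‖
      ≤ (2 * Real.sqrt c)⁻¹ * ‖S - T‖ * (2 * Real.sqrt c)⁻¹ := by
    calc ‖sav c S * (T - S) * sav c T‖ ≤ ‖sav c S‖ * ‖T - S‖ * ‖sav c T‖ := by
          refine (norm_mul_le _ _).trans ?_
          gcongr
          exact norm_mul_le _ _
      _ ≤ (2 * Real.sqrt c)⁻¹ * ‖S - T‖ * (2 * Real.sqrt c)⁻¹ := by
          rw [norm_sub_rev T S]
          gcongr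
          exacts [norm_sav_le hc, norm_sav_le hc]
  have key : (2 * Real.sqrt c)⁻¹ * ‖S - T‖ * (2 * Real.sqrt c)⁻¹ = (4 * c)⁻¹ * ‖S - T‖ := by
    rw [mul_right_comm, ← mul_inv]
    congr 2
    linear_combination (4:ℝ) * hsb
  calc ‖c • (rsv c S * (S - T) * rsv c T) + sav c S * (T - S) * sav c T‖
      ≤ ‖c • (rsv c S * (S - T) * rsv c T)‖ + ‖sav c S * (T - S) * sav c T‖ :=
        norm_add_le _ _
    _ ≤ c * (c⁻¹ * ‖S - T‖ * c⁻¹) + (4 * c)⁻¹ * ‖S - T‖ := by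
        rw [← key]
        gcongr
        rw [norm_smul, Real.norm_eq_abs, abs_of_pos hc0]
        gcongr
    _ ≤ 2 * c⁻¹ * ‖S - T‖ := by
        have h5 : c * (c⁻¹ * ‖S - T‖ * c⁻¹) = c⁻¹ * ‖S - T‖ := by
          field_simp
        rw [h5]
        have h6 : (4 * c)⁻¹ ≤ c⁻¹ := by
          apply inv_anti₀ hc0; linarith
        nlinarith [norm_nonneg (S - T)]
end two

/-! ### Integral representation of the bounded transform -/

section rep
variable {A : Type*} [CStarAlgebra A] [Nontrivial A] {a : A}

noncomputable def Lm (ha : IsSelfAdjoint a) : C(spectrum ℝ a, ℝ) →L[ℝ] A :=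
  LinearMap.mkContinuous ((cfcHom ha (R := ℝ)).toAlgHom.toLinearMap) 1
    (fun f => le_of_eq (by rw [one_mul]; exact norm_cfcHom a f ha))

lemma Lm_apply (ha : IsSelfAdjoint a) (f : C(spectrum ℝ a, ℝ)) :
    Lm ha f = cfcHom ha (R := ℝ) f := rfl

noncomputable def bigF (a : A) : C(ℝ × spectrum ℝ a, ℝ) :=
  ⟨fun p => (p.2 : ℝ) * ((1 + p.1 ^ 2) + (p.2 : ℝ) ^ 2)⁻¹, by
    fun_prop (disch := intro p; positivity)⟩

noncomputable def Fm (a : A) : ℝ → C(spectrum ℝ a, ℝ) := fun l => (bigF a).curry l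

lemma Fm_apply (l : ℝ) (x : spectrum ℝ a) :
    Fm a l x = (x : ℝ) * ((1 + l ^ 2) + (x : ℝ) ^ 2)⁻¹ := rfl

lemma norm_Fm_le (l : ℝ) : ‖Fm a l‖ ≤ (‖a‖ + 1) * (1 + l ^ 2)⁻¹ := by
  apply (ContinuousMap.norm_le _ (by positivity)).mpr
  intro x
  have hx : ‖(x:ℝ)‖ ≤ ‖a‖ := spectrum.norm_le_norm_of_mem x.2
  have h1 : (0:ℝ) < 1 + l ^ 2 := by positivity
  rw [Fm_apply, norm_mul, norm_inv]
  rw [Real.norm_of_nonneg (by positivity : (0:ℝ) ≤ (1 + l ^ 2) + (x:ℝ) ^ 2)]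
  apply mul_le_mul (hx.trans (by linarith))
    (inv_anti₀ h1 (by nlinarith [sq_nonneg (x:ℝ)])) (by positivity) (by positivity)

lemma continuous_Fm (a : A) : Continuous (Fm a) := (bigF a).curry.continuous

lemma integrableOn_Fm (a : A) : IntegrableOn (Fm a) (Ioi 0) := by
  refine Integrable.mono' (g := fun l => (‖a‖ + 1) * (1 + l ^ 2)⁻¹) ?_ ?_ ?_
  · exact (integrable_inv_add_sq le_rfl).const_mul _
  · exact ((continuous_Fm a).aestronglyMeasurable).restrict
  · filter_upwards with l using norm_Fm_le l

lemma Lm_Fm (ha : IsSelfAdjoint a) (l : ℝ) : Lm ha (Fm a l) = sav (1 + l ^ 2) a := by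
  have h1 : (1:ℝ) ≤ 1 + l ^ 2 := by nlinarith [sq_nonneg l]
  rw [sav, cfc_apply (fun x : ℝ => x * ((1 + l ^ 2) + x ^ 2)⁻¹) a ha
    ((cont_s h1).continuousOn)]
  rfl

noncomputable def gtgt (a : A) : C(spectrum ℝ a, ℝ) :=
  ⟨fun x => (x : ℝ) * (Real.sqrt (1 + (x : ℝ) ^ 2))⁻¹, by
    fun_prop (disch :=
      intro x; exact (Real.sqrt_pos.mpr (by positivity)).ne')⟩

lemma integral_Fm (a : A) : ∫ l in Ioi (0:ℝ), Fm a l = (π/2) • gtgt a := by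
  refine ContinuousMap.ext fun x => ?_
  have h1 : ((∫ l in Ioi (0:ℝ), Fm a l) x) = ∫ l in Ioi (0:ℝ), (Fm a l) x :=
    ((ContinuousMap.evalCLM ℝ x).integral_comp_comm (integrableOn_Fm a)).symm
  rw [h1]
  have hb : (1:ℝ) ≤ 1 + (x:ℝ) ^ 2 := by nlinarith [sq_nonneg (x:ℝ)]
  have hs0 : 0 < Real.sqrt (1 + (x:ℝ) ^ 2) := Real.sqrt_pos.mpr (by linarith)
  have h2 : (fun l : ℝ => (Fm a l) x)
      = fun l : ℝ => (x:ℝ) * ((1 + (x:ℝ) ^ 2) + l ^ 2)⁻¹ := by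
    ext l
    rw [Fm_apply]
    ring_nf
  rw [h2, integral_const_mul, integral_inv_add_sq hb]
  show (x:ℝ) * (π / (2 * Real.sqrt (1 + (x:ℝ) ^ 2)))
      = (π/2) * ((x:ℝ) * (Real.sqrt (1 + (x:ℝ) ^ 2))⁻¹)
  field_simp

lemma integrableOn_sav (ha : IsSelfAdjoint a) :
    IntegrableOn (fun l => sav (1 + l ^ 2) a) (Ioi 0) := by
  have h := (Lm ha).integrable_comp (integrableOn_Fm a)
  simp only [Lm_Fm ha] at h
  exact h

lemma cfc_boundedTransform_eq (ha : IsSelfAdjoint a) :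
    cfc (fun x : ℝ => x * (1 + x ^ 2) ^ (-(1 / 2 : ℝ))) a
      = (2/π) • ∫ l in Ioi (0:ℝ), sav (1 + l ^ 2) a := by
  have hπ : (0:ℝ) < π := pi_pos
  have hcongr : cfc (fun x : ℝ => x * (1 + x ^ 2) ^ (-(1 / 2 : ℝ))) a
      = cfc (fun x : ℝ => x * (Real.sqrt (1 + x ^ 2))⁻¹) a := by
    apply cfc_congr
    intro x _
    show x * (1 + x ^ 2) ^ (-(1 / 2 : ℝ)) = x * (Real.sqrt (1 + x ^ 2))⁻¹
    rw [Real.rpow_neg (by positivity), Real.sqrt_eq_rpow]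
  have hcont : Continuous (fun x : ℝ => x * (Real.sqrt (1 + x ^ 2))⁻¹) := by
    fun_prop (disch := intro x; exact (Real.sqrt_pos.mpr (by positivity)).ne')
  have hI : ∫ l in Ioi (0:ℝ), sav (1 + l ^ 2) a
      = (π/2) • cfc (fun x : ℝ => x * (Real.sqrt (1 + x ^ 2))⁻¹) a := by
    calc ∫ l in Ioi (0:ℝ), sav (1 + l ^ 2) a
        = ∫ l in Ioi (0:ℝ), Lm ha (Fm a l) := by simp only [Lm_Fm ha]
      _ = Lm ha (∫ l in Ioi (0:ℝ), Fm a l) :=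
          (Lm ha).integral_comp_comm (integrableOn_Fm a)
      _ = Lm ha ((π/2) • gtgt a) := by rw [integral_Fm a]
      _ = (π/2) • Lm ha (gtgt a) := map_smul _ _ _
      _ = (π/2) • cfc (fun x : ℝ => x * (Real.sqrt (1 + x ^ 2))⁻¹) a := by
          rw [cfc_apply (fun x : ℝ => x * (Real.sqrt (1 + x ^ 2))⁻¹) a ha
            hcont.continuousOn]
          rfl
  rw [hcongr, hI, smul_smul]
  rw [show (2/π) * (π/2) = (1:ℝ) by field_simp]
  rw [one_smul]

end rep

end BoundedTransformAux

open BoundedTransformAux in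
/-- Lipschitz estimate for the bounded transform `f(x) = x(1 + x²)^{−1/2}` under the
continuous functional calculus: there is a constant `C > 0` such that
`‖f(S) − f(T)‖ ≤ C‖S − T‖` for all self-adjoint `S, T` in a unital C*-algebra. -/
theorem boundedTransform_lipschitz (A : Type*) [CStarAlgebra A] :
    ∃ C > (0 : ℝ), ∀ S T : A, IsSelfAdjoint S → IsSelfAdjoint T →
      ‖cfc (fun x : ℝ => x * (1 + x ^ 2) ^ (-(1 / 2 : ℝ))) S -
          cfc (fun x : ℝ => x * (1 + x ^ 2) ^ (-(1 / 2 : ℝ))) T‖ ≤ C * ‖S - T‖ := by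
  refine ⟨2, by norm_num, fun S T hS hT => ?_⟩
  rcases subsingleton_or_nontrivial A with h | h
  · have e1 : (cfc (fun x : ℝ => x * (1 + x ^ 2) ^ (-(1 / 2 : ℝ))) S -
        cfc (fun x : ℝ => x * (1 + x ^ 2) ^ (-(1 / 2 : ℝ))) T) = 0 := Subsingleton.elim _ _
    have e2 : S - T = (0 : A) := Subsingleton.elim _ _
    rw [e1, e2]
    simp
  · have hπ : (0:ℝ) < π := pi_pos
    rw [cfc_boundedTransform_eq hS, cfc_boundedTransform_eq hT, ← smul_sub,
      ← integral_sub (integrableOn_sav hS) (integrableOn_sav hT), norm_smul]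
    have hb : ‖∫ l in Ioi (0:ℝ), (sav (1 + l ^ 2) S - sav (1 + l ^ 2) T)‖
        ≤ π * ‖S - T‖ := by
      have hint : IntegrableOn (fun l : ℝ => 2 * ‖S - T‖ * (1 + l ^ 2)⁻¹) (Ioi 0) :=
        (integrable_inv_add_sq le_rfl).const_mul _
      calc ‖∫ l in Ioi (0:ℝ), (sav (1 + l ^ 2) S - sav (1 + l ^ 2) T)‖
          ≤ ∫ l in Ioi (0:ℝ), 2 * ‖S - T‖ * (1 + l ^ 2)⁻¹ := by
            refine norm_integral_le_of_norm_le hint ?_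
            filter_upwards with l
            have h1 : (1:ℝ) ≤ 1 + l ^ 2 := by nlinarith [sq_nonneg l]
            calc ‖sav (1 + l ^ 2) S - sav (1 + l ^ 2) T‖
                ≤ 2 * (1 + l ^ 2)⁻¹ * ‖S - T‖ := norm_sav_sub_le h1 hS hT
              _ = 2 * ‖S - T‖ * (1 + l ^ 2)⁻¹ := by ring
        _ = π * ‖S - T‖ := by
            rw [integral_const_mul, integral_inv_add_sq le_rfl, Real.sqrt_one]
            field_simp
    calc ‖(2/π : ℝ)‖ * ‖∫ l in Ioi (0:ℝ), (sav (1 + l ^ 2) S - sav (1 + l ^ 2) T)‖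
        ≤ (2/π) * (π * ‖S - T‖) := by
          rw [Real.norm_of_nonneg (by positivity)]
          gcongr
      _ = 2 * ‖S - T‖ := by field_simp
end

section
/- Let g : ℝ → ℂ be integrable with ∫ |ξ| |g(ξ)| dξ < ∞, and suppose the function f : ℝ → ℝ defined by f(x) = ∫_ℝ g(ξ) e^{iξx} dξ is real-valued (f is then bounded and continuous). Let A be a unital C*-algebra, D ∈ A self-adjoint and a ∈ A. Then ‖f(D)·a − a·f(D)‖ ≤ (∫_ℝ |ξ| |g(ξ)| dξ)·‖Da − aD‖, where f(D) is defined by the continuous functional calculus. -/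
open MeasureTheory NormedSpace Complex

section aux
variable {A : Type*} [CStarAlgebra A]

lemma aux_mem_unitary {D : A} (hD : IsSelfAdjoint D) (t : ℝ) :
    NormedSpace.exp ((I * t) • D) ∈ unitary A := by
  letI : NormedAlgebra ℚ A := .restrictScalars ℚ ℂ A
  refine exp_mem_unitary_of_mem_skewAdjoint ?_
  rw [skewAdjoint.mem_iff, star_smul, hD.star_eq, ← neg_smul]
  congr 1
  simp [Complex.conj_ofReal]

lemma aux_norm_exp [Nontrivial A] {D : A} (hD : IsSelfAdjoint D) (t : ℝ) :
    ‖NormedSpace.exp ((I * t) • D)‖ = 1 :=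
  CStarRing.norm_of_mem_unitary (aux_mem_unitary hD t)

lemma aux_smul_eq (D : A) (t : ℝ) : t • (I • D) = (I * t) • D := by
  rw [smul_comm, ← Complex.coe_smul, smul_smul, mul_comm]

lemma aux_comm_exp [Nontrivial A] {D : A} (hD : IsSelfAdjoint D) (a : A) (ξ : ℝ) :
    ‖NormedSpace.exp ((I * ξ) • D) * a - a * NormedSpace.exp ((I * ξ) • D)‖ ≤ |ξ| * ‖D * a - a * D‖ := by
  set u : A := I • D with hu
  have hsm : ∀ t : ℝ, t • u = (I * t) • D := aux_smul_eq D
  have hsm' : ∀ t : ℝ, t • (-u) = (I * (-t)) • D := by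
    intro t
    rw [smul_neg, hsm, ← neg_smul, ← mul_neg]
  have hnorm : ∀ t : ℝ, ‖NormedSpace.exp (t • u)‖ = 1 := fun t => hsm t ▸ aux_norm_exp hD t
  have hnorm' : ∀ t : ℝ, ‖NormedSpace.exp (t • (-u))‖ = 1 := by
    intro t
    rw [hsm' t]
    have := aux_norm_exp hD (-t)
    rwa [Complex.ofReal_neg] at this
  set F : ℝ → A := fun t => NormedSpace.exp (t • u) * a * NormedSpace.exp (t • (-u)) with hF
  have h1 : ∀ t : ℝ, HasDerivAt (fun s : ℝ => NormedSpace.exp (s • u)) (NormedSpace.exp (t • u) * u) t := by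
    intro t
    exact hasDerivAt_exp_smul_const (𝕂 := ℝ) u t
  have h2 : ∀ t : ℝ, HasDerivAt (fun s : ℝ => NormedSpace.exp (s • (-u))) ((-u) * NormedSpace.exp (t • (-u))) t := by
    intro t
    exact hasDerivAt_exp_smul_const' (𝕂 := ℝ) (-u) t
  have hderiv : ∀ t : ℝ,
      HasDerivAt F (NormedSpace.exp (t • u) * (u * a - a * u) * NormedSpace.exp (t • (-u))) t := by
    intro t
    have := ((h1 t).mul_const a).mul (h2 t)
    convert this using 1
    · rfl
    noncomm_ring
  have hbound : ∀ t : ℝ, ‖NormedSpace.exp (t • u) * (u * a - a * u) * NormedSpace.exp (t • (-u))‖ ≤ ‖D * a - a * D‖ := by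
    intro t
    have hc : u * a - a * u = I • (D * a - a * D) := by
      rw [hu, smul_mul_assoc, mul_smul_comm, smul_sub]
    calc ‖NormedSpace.exp (t • u) * (u * a - a * u) * NormedSpace.exp (t • (-u))‖
        ≤ ‖NormedSpace.exp (t • u) * (u * a - a * u)‖ * ‖NormedSpace.exp (t • (-u))‖ := norm_mul_le _ _
      _ ≤ ‖NormedSpace.exp (t • u)‖ * ‖u * a - a * u‖ * ‖NormedSpace.exp (t • (-u))‖ := by
          gcongr; exact norm_mul_le _ _
      _ = ‖D * a - a * D‖ := by
          rw [hnorm, hnorm', hc, norm_smul, Complex.norm_I]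
          ring
  have hmvt : ‖F ξ - F 0‖ ≤ ‖D * a - a * D‖ * ‖ξ - (0:ℝ)‖ := by
    refine convex_univ.norm_image_sub_le_of_norm_hasDerivWithin_le
      (fun t _ => (hderiv t).hasDerivWithinAt) (fun t _ => hbound t)
      (Set.mem_univ 0) (Set.mem_univ ξ)
  have hF0 : F 0 = a := by simp [hF]
  have hinv : NormedSpace.exp (ξ • (-u)) * NormedSpace.exp (ξ • u) = 1 := by
    letI : NormedAlgebra ℚ A := .restrictScalars ℚ ℂ A
    rw [smul_neg, ← exp_add_of_commute (Commute.refl (ξ • u)).neg_left, neg_add_cancel, NormedSpace.exp_zero]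
  have hkey : NormedSpace.exp (ξ • u) * a - a * NormedSpace.exp (ξ • u) = (F ξ - a) * NormedSpace.exp (ξ • u) := by
    rw [hF]
    simp only [sub_mul]
    congr 1
    rw [mul_assoc, mul_assoc, hinv, mul_one]
  calc ‖NormedSpace.exp ((I * ξ) • D) * a - a * NormedSpace.exp ((I * ξ) • D)‖
      = ‖(F ξ - a) * NormedSpace.exp (ξ • u)‖ := by rw [← hsm ξ, hkey]
    _ ≤ ‖F ξ - a‖ * ‖NormedSpace.exp (ξ • u)‖ := norm_mul_le _ _
    _ = ‖F ξ - F 0‖ := by rw [hnorm, hF0, mul_one]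
    _ ≤ ‖D * a - a * D‖ * ‖ξ - (0:ℝ)‖ := hmvt
    _ = |ξ| * ‖D * a - a * D‖ := by rw [sub_zero, Real.norm_eq_abs]; ring


lemma aux_cfc_eq_integral (g : ℝ → ℂ) (hg : Integrable g) (f : ℝ → ℝ)
    (hf : ∀ x : ℝ, (f x : ℂ) = ∫ ξ : ℝ, g ξ * Complex.exp (Complex.I * ξ * x))
    (D : A) (hD : IsSelfAdjoint D) :
    cfc f D = ∫ ξ : ℝ, g ξ • NormedSpace.exp ((I * ξ) • D) := by
  have hDn : IsStarNormal D := hD.isStarNormal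
  set K := spectrum ℂ D with hK
  set ι : C(K, ℂ) := (ContinuousMap.id ℂ).restrict K with hι
  set E : ℝ → C(K, ℂ) := fun ξ => NormedSpace.exp ((I * ξ) • ι) with hE
  have hEcont : Continuous E :=
    exp_continuous.comp ((continuous_const.mul Complex.continuous_ofReal).smul continuous_const)
  have hEapply : ∀ (ξ : ℝ) (x : K), E ξ x = Complex.exp (I * ξ * x) := by
    intro ξ x
    rw [hE]
    simp only [NormedSpace.exp_continuousMap_eq]
    simp [← Complex.exp_eq_exp_ℂ, hι, smul_eq_mul]
  have hEnorm : ∀ ξ : ℝ, ‖E ξ‖ ≤ 1 := by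
    intro ξ
    rw [ContinuousMap.norm_le _ zero_le_one]
    intro x
    rw [hEapply]
    have hx : (x : ℂ) = ((x : ℂ).re : ℂ) := hD.mem_spectrum_eq_re x.2
    rw [hx, Complex.norm_exp]
    simp
  set G : ℝ → C(K, ℂ) := fun ξ => g ξ • E ξ with hG
  have hGint : Integrable G := by
    refine hg.norm.mono' (hg.aestronglyMeasurable.smul hEcont.aestronglyMeasurable) ?_
    filter_upwards with ξ
    show ‖g ξ • E ξ‖ ≤ ‖g ξ‖
    refine (_root_.norm_smul_le (g ξ) (E ξ)).trans ?_
    calc ‖g ξ‖ * ‖E ξ‖ ≤ ‖g ξ‖ * 1 := by gcongr; exact hEnorm ξ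
      _ = ‖g ξ‖ := mul_one _
  set φ := cfcHom (R := ℂ) hDn with hφ
  set φL : C(K, ℂ) →L[ℂ] A := ⟨φ.toAlgHom.toLinearMap, cfcHom_continuous hDn⟩ with hφL
  have hφE : ∀ ξ : ℝ, φL (G ξ) = g ξ • NormedSpace.exp ((I * ξ) • D) := by
    intro ξ
    show φ (g ξ • E ξ) = _
    rw [_root_.map_smul]
    congr 1
    show φ (NormedSpace.exp ((I * ξ) • ι)) = _
    letI : NormedAlgebra ℚ A := .restrictScalars ℚ ℂ A
    rw [map_exp φ (cfcHom_continuous hDn), _root_.map_smul,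
      show φ ι = D from cfcHom_id hDn]
  have key : φL (∫ ξ : ℝ, G ξ) = ∫ ξ : ℝ, g ξ • NormedSpace.exp ((I * ξ) • D) := by
    rw [← φL.integral_comp_comm hGint]
    exact integral_congr_ae (Filter.Eventually.of_forall hφE)
  -- continuity of f
  have hFc : Continuous fun x : ℝ => ∫ ξ : ℝ, g ξ * Complex.exp (I * ξ * x) := by
    refine continuous_of_dominated (bound := fun ξ => ‖g ξ‖) ?_ ?_ hg.norm ?_
    · intro x
      exact hg.aestronglyMeasurable.mul
        ((Complex.continuous_exp.comp ((continuous_const.mul Complex.continuous_ofReal).mul continuous_const)).aestronglyMeasurable)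
    · intro x
      filter_upwards with ξ
      rw [norm_mul, Complex.norm_exp]
      simp
    · filter_upwards with ξ
      exact continuous_const.mul (Complex.continuous_exp.comp (continuous_const.mul Complex.continuous_ofReal))
  have hfre : ∀ x : ℝ, f x = (∫ ξ : ℝ, g ξ * Complex.exp (I * ξ * x)).re := by
    intro x
    rw [← hf x, Complex.ofReal_re]
  have hfc : Continuous f := by
    have heq : f = fun x : ℝ => (∫ ξ : ℝ, g ξ * Complex.exp (I * ξ * (x : ℂ))).re :=
      funext hfre
    rw [heq]
    exact Complex.continuous_re.comp hFc
  have hfc' : ContinuousOn (fun x : ℂ => (f x.re : ℂ)) K :=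
    (Complex.continuous_ofReal.comp (hfc.comp Complex.continuous_re)).continuousOn
  rw [cfc_real_eq_complex f hD, cfc_apply (fun x : ℂ => (f x.re : ℂ)) D hDn hfc', ← key]
  show φ _ = φ (∫ ξ : ℝ, G ξ)
  congr 1
  ext x
  rw [ContinuousMap.integral_apply hGint]
  simp only [hG, ContinuousMap.smul_apply, smul_eq_mul, hEapply]
  show (f (x : ℂ).re : ℂ) = _
  rw [hf]
  have hx : ((x : ℂ).re : ℂ) = (x : ℂ) := (hD.mem_spectrum_eq_re x.2).symm
  rw [hx]


end aux

open Complex NormedSpace in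
/-- Fourier-transform commutator estimate: if `g : ℝ → ℂ` is integrable with
`∫ |ξ|·|g(ξ)| dξ < ∞` and the real-valued function `f(x) = ∫ g(ξ) e^{iξx} dξ`, then
for any self-adjoint `D` and any `a` in a unital C*-algebra,
`‖[f(D), a]‖ ≤ (∫ |ξ|·|g(ξ)| dξ)·‖[D, a]‖`. -/
theorem fourier_comm_estimate (A : Type*) [CStarAlgebra A] (g : ℝ → ℂ)
    (hg : Integrable g) (hg' : Integrable fun ξ : ℝ => |ξ| * ‖g ξ‖)
    (f : ℝ → ℝ)
    (hf : ∀ x : ℝ, (f x : ℂ) = ∫ ξ : ℝ, g ξ * Complex.exp (Complex.I * ξ * x))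
    (D a : A) (hD : IsSelfAdjoint D) :
    ‖cfc f D * a - a * cfc f D‖ ≤ (∫ ξ : ℝ, |ξ| * ‖g ξ‖) * ‖D * a - a * D‖ := by
  rcases subsingleton_or_nontrivial A with hA | hA
  · rw [Subsingleton.elim (cfc f D * a - a * cfc f D) 0, norm_zero]
    exact mul_nonneg (integral_nonneg fun ξ => mul_nonneg (abs_nonneg _) (norm_nonneg _))
      (norm_nonneg _)
  · have hrep := aux_cfc_eq_integral g hg f hf D hD
    set C := ‖D * a - a * D‖ with hC
    set u : ℝ → A := fun ξ => NormedSpace.exp ((I * ξ) • D) with hu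
    have hucont : Continuous u := by
      letI : NormedAlgebra ℚ A := .restrictScalars ℚ ℂ A
      exact exp_continuous.comp ((continuous_const.mul Complex.continuous_ofReal).smul continuous_const)
    have hint : Integrable fun ξ : ℝ => g ξ • u ξ := by
      refine hg.norm.mono' (hg.aestronglyMeasurable.smul hucont.aestronglyMeasurable) ?_
      filter_upwards with ξ
      rw [_root_.norm_smul (g ξ) (u ξ), hu]
      rw [show ‖NormedSpace.exp ((I * (ξ:ℝ)) • D)‖ = 1 from aux_norm_exp hD ξ, mul_one]
    set ψ : A →L[ℂ] A :=
      (ContinuousLinearMap.mul ℂ A).flip a - ContinuousLinearMap.mul ℂ A a with hψdef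
    have hψ : ∀ x : A, ψ x = x * a - a * x := by
      intro x
      simp [hψdef]
    have hcomm : cfc f D * a - a * cfc f D = ∫ ξ : ℝ, g ξ • (u ξ * a - a * u ξ) := by
      rw [hrep, ← hψ, ← ψ.integral_comp_comm hint]
      refine integral_congr_ae (Filter.Eventually.of_forall fun ξ => ?_)
      show ψ (g ξ • u ξ) = g ξ • (u ξ * a - a * u ξ)
      rw [_root_.map_smul, hψ, smul_sub]
    rw [hcomm]
    refine le_trans (norm_integral_le_of_norm_le (hg'.mul_const C) ?_) ?_
    · filter_upwards with ξ
      rw [_root_.norm_smul (g ξ) (u ξ * a - a * u ξ)]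
      calc ‖g ξ‖ * ‖u ξ * a - a * u ξ‖ ≤ ‖g ξ‖ * (|ξ| * C) := by
            gcongr
            exact aux_comm_exp hD a ξ
        _ = (|ξ| * ‖g ξ‖) * C := by ring
    · rw [integral_mul_const]
end
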